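/- arXiv:1706.06250 — 8 statements merged into one kernel-verified Lean document; each statement's English description precedes it below -/
import Mathlib

section
/- Let 0 < a < b and let f, g : [a,b] → ℝ be Lebesgue integrable. If (y·f(x) − x·f(y))·(x·g(y) − y·g(x)) ≤ 0 for all x, y ∈ [a,b], then ((b³ − a³)/3)·∫_a^b f(x)g(x) dx ≥ (∫_a^b x·f(x) dx)·(∫_a^b x·g(x) dx). -/
open intervalIntegral

private lemma my_integral_nonpos {a b : ℝ} {f : ℝ → ℝ} (hab : a ≤ b)
    (h : ∀ u ∈ Set.Icc a b, f u ≤ 0) : (∫ u in a..b, f u) ≤ 0 := by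
  have h0 : (0:ℝ) ≤ ∫ u in a..b, -f u :=
    integral_nonneg hab (fun u hu => neg_nonneg.2 (h u hu))
  rw [integral_neg] at h0
  linarith


theorem positivity_pompeiu_chebyshev (a b : ℝ) (ha : 0 < a) (hab : a < b) (f g : ℝ → ℝ)
    (hf : IntervalIntegrable f MeasureTheory.volume a b)
    (hg : IntervalIntegrable g MeasureTheory.volume a b)
    (hfg : IntervalIntegrable (fun x => f x * g x) MeasureTheory.volume a b)
    (hcond : ∀ x ∈ Set.Icc a b, ∀ y ∈ Set.Icc a b,
      (y * f x - x * f y) * (x * g y - y * g x) ≤ 0) :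
    (b ^ 3 - a ^ 3) / 3 * ∫ x in a..b, f x * g x ≥
      (∫ x in a..b, x * f x) * ∫ x in a..b, x * g x := by
  have hab' : a ≤ b := hab.le
  set I1 := ∫ x in a..b, x * f x with hI1
  set I2 := ∫ x in a..b, x * g x with hI2
  set J := ∫ x in a..b, f x * g x with hJ
  set S := (b ^ 3 - a ^ 3) / 3 with hSdef
  have hS : (∫ y in a..b, y ^ 2) = S := by
    rw [integral_pow]; norm_num [hSdef]
  have hxf : IntervalIntegrable (fun x => x * f x) MeasureTheory.volume a b :=
    hf.continuousOn_mul continuousOn_id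
  have hxg : IntervalIntegrable (fun x => x * g x) MeasureTheory.volume a b :=
    hg.continuousOn_mul continuousOn_id
  have hsq : IntervalIntegrable (fun y : ℝ => y ^ 2) MeasureTheory.volume a b :=
    (continuous_pow 2).intervalIntegrable a b
  have key : ∀ x ∈ Set.Icc a b,
      f x * x * I2 - f x * g x * S - x ^ 2 * J + g x * x * I1 ≤ 0 := by
    intro x hx
    have h1 : (∫ y in a..b, (y * f x - x * f y) * (x * g y - y * g x))
        = f x * x * I2 - f x * g x * S - x ^ 2 * J + g x * x * I1 := by
      have heq : ∀ y : ℝ, (y * f x - x * f y) * (x * g y - y * g x)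
          = f x * x * (y * g y) - f x * g x * y ^ 2 - x ^ 2 * (f y * g y)
            + g x * x * (y * f y) := by intro y; ring
      simp_rw [heq]
      rw [integral_add (((hxg.const_mul _).sub (hsq.const_mul _)).sub (hfg.const_mul _))
            (hxf.const_mul _),
          integral_sub ((hxg.const_mul _).sub (hsq.const_mul _)) (hfg.const_mul _),
          integral_sub (hxg.const_mul _) (hsq.const_mul _),
          integral_const_mul, integral_const_mul, integral_const_mul, integral_const_mul, hS]
    rw [← h1]
    exact my_integral_nonpos hab' (fun y hy => hcond x hx y hy)
  have h2 : (∫ x in a..b, (f x * x * I2 - f x * g x * S - x ^ 2 * J + g x * x * I1)) ≤ 0 :=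
    my_integral_nonpos hab' key
  have h3 : (∫ x in a..b, (f x * x * I2 - f x * g x * S - x ^ 2 * J + g x * x * I1))
      = I1 * I2 - J * S - S * J + I2 * I1 := by
    have heq : ∀ x : ℝ, f x * x * I2 - f x * g x * S - x ^ 2 * J + g x * x * I1
        = (x * f x) * I2 - (f x * g x) * S - x ^ 2 * J + (x * g x) * I1 := by
      intro x; ring
    simp_rw [heq]
    rw [integral_add (((hxf.mul_const _).sub (hfg.mul_const _)).sub (hsq.mul_const _))
          (hxg.mul_const _),
        integral_sub ((hxf.mul_const _).sub (hfg.mul_const _)) (hsq.mul_const _),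
        integral_sub (hxf.mul_const _) (hfg.mul_const _),
        integral_mul_const, integral_mul_const, integral_mul_const, integral_mul_const, hS]
  rw [h3] at h2
  have : I1 * I2 ≤ S * J := by nlinarith
  exact this
end

section
/- Let 0 < a < b and let f, g : [a,b] → ℝ be Lebesgue integrable. If (y·f(x) − x·f(y))·(x·g(y) − y·g(x)) ≥ 0 for all x, y ∈ [a,b], then ((b³ − a³)/3)·∫_a^b f(x)g(x) dx ≤ (∫_a^b x·f(x) dx)·(∫_a^b x·g(x) dx). -/
theorem negativity_pompeiu_chebyshev (a b : ℝ) (ha : 0 < a) (hab : a < b) (f g : ℝ → ℝ)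
    (hf : IntervalIntegrable f MeasureTheory.volume a b)
    (hg : IntervalIntegrable g MeasureTheory.volume a b)
    (hfg : IntervalIntegrable (fun x => f x * g x) MeasureTheory.volume a b)
    (hcond : ∀ x ∈ Set.Icc a b, ∀ y ∈ Set.Icc a b,
      (y * f x - x * f y) * (x * g y - y * g x) ≥ 0) :
    (b ^ 3 - a ^ 3) / 3 * ∫ x in a..b, f x * g x ≤
      (∫ x in a..b, x * f x) * ∫ x in a..b, x * g x := by
  set A := ∫ x in a..b, x * f x with hA
  set B := ∫ x in a..b, x * g x with hB
  set C := ∫ x in a..b, f x * g x with hC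
  set K : ℝ := (b ^ 3 - a ^ 3) / 3 with hK
  have hif : IntervalIntegrable (fun y => y * f y) MeasureTheory.volume a b :=
    hf.continuousOn_mul continuous_id.continuousOn
  have hig : IntervalIntegrable (fun y => y * g y) MeasureTheory.volume a b :=
    hg.continuousOn_mul continuous_id.continuousOn
  have hsq : ∫ y in a..b, y ^ 2 = K := by
    rw [integral_pow]; norm_num [hK]
  have key : ∀ x : ℝ,
      (∫ y in a..b, (y * f x - x * f y) * (x * g y - y * g x)) =
        x * f x * B - f x * g x * K - x ^ 2 * C + x * g x * A := by
    intro x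
    have e1 : (fun y => (y * f x - x * f y) * (x * g y - y * g x)) =
        fun y => (x * f x * (y * g y) - f x * g x * y ^ 2 - x ^ 2 * (f y * g y))
          + x * g x * (y * f y) := by
      funext y; ring
    rw [e1]
    rw [intervalIntegral.integral_add
        (((hig.const_mul _).sub ((intervalIntegral.intervalIntegrable_pow 2).const_mul _)).sub
          (hfg.const_mul _)) (hif.const_mul _),
      intervalIntegral.integral_sub
        ((hig.const_mul _).sub ((intervalIntegral.intervalIntegrable_pow 2).const_mul _)) (hfg.const_mul _),
      intervalIntegral.integral_sub (hig.const_mul _) ((intervalIntegral.intervalIntegrable_pow 2).const_mul _),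
      intervalIntegral.integral_const_mul, intervalIntegral.integral_const_mul,
      intervalIntegral.integral_const_mul, intervalIntegral.integral_const_mul, hsq]
    try ring_nf
  have hE : ∀ x ∈ Set.Icc a b,
      0 ≤ x * f x * B - f x * g x * K - x ^ 2 * C + x * g x * A := by
    intro x hx
    rw [← key x]
    exact intervalIntegral.integral_nonneg hab.le fun y hy => hcond x hx y hy
  have hnn : 0 ≤ ∫ x in a..b,
      (x * f x * B - f x * g x * K - x ^ 2 * C + x * g x * A) :=
    intervalIntegral.integral_nonneg hab.le hE
  have comp : (∫ x in a..b,
      (x * f x * B - f x * g x * K - x ^ 2 * C + x * g x * A)) =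
        A * B - C * K - K * C + B * A := by
    rw [intervalIntegral.integral_add
        (((hif.mul_const _).sub (hfg.mul_const _)).sub
          ((intervalIntegral.intervalIntegrable_pow 2).mul_const _)) (hig.mul_const _),
      intervalIntegral.integral_sub
        ((hif.mul_const _).sub (hfg.mul_const _)) ((intervalIntegral.intervalIntegrable_pow 2).mul_const _),
      intervalIntegral.integral_sub (hif.mul_const _) (hfg.mul_const _),
      intervalIntegral.integral_mul_const, intervalIntegral.integral_mul_const,
      intervalIntegral.integral_mul_const, intervalIntegral.integral_mul_const, hsq]
  rw [comp] at hnn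
  show K * C ≤ A * B
  linarith
end

section
/- Let 0 < a < b and let f, g : [a,b] → ℝ be Lebesgue integrable. Define P(f,g) = ((b³−a³)/3)·∫_a^b f(x)g(x) dx − (∫_a^b x f(x) dx)·(∫_a^b x g(x) dx). Then P(f,g) = (1/2)·∫_a^b ∫_a^b (t f(x) − x f(t))·(t g(x) − x g(t)) dt dx. -/
open MeasureTheory intervalIntegral

theorem pompeiu_chebyshev_double_integral_repr (a b : ℝ) (ha : 0 < a) (hab : a < b)
    (f g : ℝ → ℝ)
    (hf : IntervalIntegrable f MeasureTheory.volume a b)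
    (hg : IntervalIntegrable g MeasureTheory.volume a b)
    (hfg : IntervalIntegrable (fun x => f x * g x) MeasureTheory.volume a b) :
    (b ^ 3 - a ^ 3) / 3 * (∫ x in a..b, f x * g x) -
        (∫ x in a..b, x * f x) * ∫ x in a..b, x * g x =
      (1 / 2) * ∫ x in a..b, ∫ t in a..b,
        (t * f x - x * f t) * (t * g x - x * g t) := by
  have hxf : IntervalIntegrable (fun x => x * f x) volume a b :=
    hf.continuousOn_mul continuousOn_id
  have hxg : IntervalIntegrable (fun x => x * g x) volume a b :=
    hg.continuousOn_mul continuousOn_id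
  have ht2 : (∫ t in a..b, t ^ 2) = (b ^ 3 - a ^ 3) / 3 := by
    rw [integral_pow]; norm_num
  set Ifg := ∫ x in a..b, f x * g x with hIfg
  set Ixf := ∫ x in a..b, x * f x with hIxf
  set Ixg := ∫ x in a..b, x * g x with hIxg
  have hinner : ∀ x : ℝ, (∫ t in a..b, (t * f x - x * f t) * (t * g x - x * g t))
      = f x * g x * ((b ^ 3 - a ^ 3) / 3) - x * f x * Ixg - x * g x * Ixf
        + x ^ 2 * Ifg := by
    intro x
    have heq : ∀ t : ℝ, (t * f x - x * f t) * (t * g x - x * g t)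
        = f x * g x * t ^ 2 - x * f x * (t * g t) - x * g x * (t * f t)
          + x ^ 2 * (f t * g t) := by intro t; ring
    have h1 : IntervalIntegrable (fun t : ℝ => f x * g x * t ^ 2) volume a b :=
      (intervalIntegrable_pow 2).const_mul _
    have h2 : IntervalIntegrable (fun t : ℝ => x * f x * (t * g t)) volume a b :=
      hxg.const_mul _
    have h3 : IntervalIntegrable (fun t : ℝ => x * g x * (t * f t)) volume a b :=
      hxf.const_mul _
    have h4 : IntervalIntegrable (fun t : ℝ => x ^ 2 * (f t * g t)) volume a b :=
      hfg.const_mul _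
    calc (∫ t in a..b, (t * f x - x * f t) * (t * g x - x * g t))
        = ∫ t in a..b, (f x * g x * t ^ 2 - x * f x * (t * g t)
            - x * g x * (t * f t) + x ^ 2 * (f t * g t)) := by
          simp only [heq]
      _ = (∫ t in a..b, f x * g x * t ^ 2) - (∫ t in a..b, x * f x * (t * g t))
            - (∫ t in a..b, x * g x * (t * f t)) + ∫ t in a..b, x ^ 2 * (f t * g t) := by
          rw [integral_add ((h1.sub h2).sub h3) h4, integral_sub (h1.sub h2) h3,
            integral_sub h1 h2]
      _ = f x * g x * ((b ^ 3 - a ^ 3) / 3) - x * f x * Ixg - x * g x * Ixf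
            + x ^ 2 * Ifg := by
          rw [intervalIntegral.integral_const_mul, intervalIntegral.integral_const_mul, intervalIntegral.integral_const_mul,
            intervalIntegral.integral_const_mul, ht2]
  have houter : (∫ x in a..b, ∫ t in a..b, (t * f x - x * f t) * (t * g x - x * g t))
      = ((b ^ 3 - a ^ 3) / 3) * Ifg - Ixf * Ixg - Ixg * Ixf + ((b ^ 3 - a ^ 3) / 3) * Ifg := by
    have h1 : IntervalIntegrable (fun x => f x * g x * ((b ^ 3 - a ^ 3) / 3)) volume a b :=
      hfg.mul_const _
    have h2 : IntervalIntegrable (fun x => x * f x * Ixg) volume a b := hxf.mul_const _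
    have h3 : IntervalIntegrable (fun x => x * g x * Ixf) volume a b := hxg.mul_const _
    have h4 : IntervalIntegrable (fun x : ℝ => x ^ 2 * Ifg) volume a b :=
      (intervalIntegrable_pow 2).mul_const _
    calc (∫ x in a..b, ∫ t in a..b, (t * f x - x * f t) * (t * g x - x * g t))
        = ∫ x in a..b, (f x * g x * ((b ^ 3 - a ^ 3) / 3) - x * f x * Ixg
            - x * g x * Ixf + x ^ 2 * Ifg) := by
          simp only [hinner]
      _ = (∫ x in a..b, f x * g x * ((b ^ 3 - a ^ 3) / 3)) - (∫ x in a..b, x * f x * Ixg)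
            - (∫ x in a..b, x * g x * Ixf) + ∫ x in a..b, x ^ 2 * Ifg := by
          rw [integral_add ((h1.sub h2).sub h3) h4, integral_sub (h1.sub h2) h3,
            integral_sub h1 h2]
      _ = ((b ^ 3 - a ^ 3) / 3) * Ifg - Ixf * Ixg - Ixg * Ixf
            + ((b ^ 3 - a ^ 3) / 3) * Ifg := by
          rw [intervalIntegral.integral_mul_const, intervalIntegral.integral_mul_const, intervalIntegral.integral_mul_const,
            intervalIntegral.integral_mul_const, ht2]
          ring
  rw [houter]; ring
end

section
/- Let 0 < a < b, and let f, g : [a,b] → ℝ be absolutely continuous with f' ∈ L^∞[a,b] and g' ∈ L^1[a,b]. Then |P(f,g)| ≤ (1/2)·(b²a − (a³+8b³)/9 + (2/3)b³·ln(b/a))·‖f − ℓf'‖_∞·‖g − ℓg'‖_1, where ℓ(t) = t and P(f,g) = ((b³−a³)/3)∫_a^b fg − (∫_a^b x f)(∫_a^b x g). -/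
open Set MeasureTheory intervalIntegral

private lemma mono_side (a b M : ℝ) (ha : 0 < a) (f f' : ℝ → ℝ)
    (hf : ∀ x ∈ Icc a b, HasDerivAt f (f' x) x)
    (hM : ∀ s ∈ Icc a b, s * f' s - f s ≤ M)
    {t x : ℝ} (ht : t ∈ Icc a b) (hx : x ∈ Icc a b) (htx : t ≤ x) :
    f x / x - f t / t ≤ M * (1 / t - 1 / x) := by
  have hsub : Icc t x ⊆ Icc a b := Icc_subset_Icc ht.1 hx.2
  have hpos : ∀ s ∈ Icc a b, 0 < s := fun s hs => lt_of_lt_of_le ha hs.1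
  have hψd : ∀ s ∈ Icc a b, HasDerivAt (fun s => -M / s - f s / s)
      ((M + f s - s * f' s) / s ^ 2) s := by
    intro s hs
    have hs0 : s ≠ 0 := (hpos s hs).ne'
    have h1 : HasDerivAt (fun s : ℝ => -M / s) ((0 * s - (-M) * 1) / s ^ 2) s :=
      (hasDerivAt_const s (-M)).div (hasDerivAt_id s) hs0
    have h2 : HasDerivAt (fun s => f s / s) ((f' s * s - f s * 1) / s ^ 2) s :=
      (hf s hs).div (hasDerivAt_id s) hs0
    have := h1.sub h2
    refine this.congr_deriv ?_
    field_simp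
    ring
  have hmono : MonotoneOn (fun s => -M / s - f s / s) (Icc t x) := by
    apply monotoneOn_of_deriv_nonneg (convex_Icc t x)
    · exact fun s hs => ((hψd s (hsub hs)).continuousAt).continuousWithinAt
    · intro s hs
      rw [interior_Icc] at hs
      exact ((hψd s (hsub (Ioo_subset_Icc_self hs))).differentiableAt).differentiableWithinAt
    · intro s hs
      rw [interior_Icc] at hs
      have hs' := hsub (Ioo_subset_Icc_self hs)
      rw [(hψd s hs').deriv]
      have h1 := hM s hs'
      have h2 := sq_nonneg s
      apply div_nonneg (by linarith) h2
  have h := hmono (left_mem_Icc.mpr htx) (right_mem_Icc.mpr htx) htx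
  simp only at h
  have e1 : -M/t = -(M/t) := by ring
  have e2 : -M/x = -(M/x) := by ring
  have e3 : M * (1/t - 1/x) = M/t - M/x := by ring
  linarith

private lemma ratio_diff_bound (a b M : ℝ) (ha : 0 < a) (f f' : ℝ → ℝ)
    (hf : ∀ x ∈ Icc a b, HasDerivAt f (f' x) x)
    (hM : ∀ s ∈ Icc a b, |f s - s * f' s| ≤ M)
    {t x : ℝ} (ht : t ∈ Icc a b) (hx : x ∈ Icc a b) (htx : t ≤ x) :
    |f x / x - f t / t| ≤ M * (1 / t - 1 / x) := by
  rw [abs_le]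
  constructor
  · have := mono_side a b M ha (fun s => -f s) (fun s => -f' s)
      (fun s hs => (hf s hs).neg)
      (fun s hs => by
        have h2 := (abs_le.mp (hM s hs)).2
        show s * -f' s - -f s ≤ M
        linarith [show s * -f' s - -f s = f s - s * f' s from by ring]) ht hx htx
    have e : (-f x) / x - (-f t) / t = -(f x / x - f t / t) := by ring
    linarith [e ▸ this]
  · exact mono_side a b M ha f f' hf
      (fun s hs => by have := (abs_le.mp (hM s hs)).1; linarith) ht hx htx

private lemma f_cross_bound (a b M : ℝ) (ha : 0 < a) (f f' : ℝ → ℝ)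
    (hf : ∀ x ∈ Icc a b, HasDerivAt f (f' x) x)
    (hM : ∀ s ∈ Icc a b, |f s - s * f' s| ≤ M)
    {t x : ℝ} (ht : t ∈ Icc a b) (hx : x ∈ Icc a b) :
    |t * f x - x * f t| ≤ M * |x - t| := by
  have key : ∀ u v : ℝ, u ∈ Icc a b → v ∈ Icc a b → u ≤ v →
      |u * f v - v * f u| ≤ M * |v - u| := by
    intro u v hu hv huv
    have hu0 : (0:ℝ) < u := lt_of_lt_of_le ha hu.1
    have hv0 : (0:ℝ) < v := lt_of_lt_of_le ha hv.1
    have h := ratio_diff_bound a b M ha f f' hf hM hu hv huv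
    have e : u * f v - v * f u = (u * v) * (f v / v - f u / u) := by
      field_simp
    rw [e, abs_mul, abs_of_pos (mul_pos hu0 hv0), abs_of_nonneg (by linarith : (0:ℝ) ≤ v - u)]
    calc u * v * |f v / v - f u / u| ≤ u * v * (M * (1/u - 1/v)) := by
          exact mul_le_mul_of_nonneg_left h (by positivity)
      _ = M * (v - u) := by field_simp; try ring
  rcases le_total t x with h | h
  · exact key t x ht hx h
  · have := key x t hx ht h
    rw [abs_sub_comm, abs_sub_comm x t]
    linarith [abs_sub_comm (x * f t) (t * f x) ▸ this]

private lemma g_cross_bound_le (a b : ℝ) (ha : 0 < a) (g g' : ℝ → ℝ)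
    (hg : ∀ x ∈ Icc a b, HasDerivAt g (g' x) x)
    (hg' : IntervalIntegrable g' volume a b)
    {t x : ℝ} (ht : t ∈ Icc a b) (hx : x ∈ Icc a b) (htx : t ≤ x) :
    |t * g x - x * g t| ≤ (x / t) * ∫ s in a..b, |g s - s * g' s| := by
  have hab : a ≤ b := ht.1.trans (ht.2)
  have hpos : ∀ s ∈ Icc a b, 0 < s := fun s hs => lt_of_lt_of_le ha hs.1
  have ht0 : 0 < t := hpos t ht
  have hx0 : 0 < x := hpos x hx
  have hsubI : Icc t x ⊆ Icc a b := Icc_subset_Icc ht.1 hx.2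
  have huIcc : uIcc t x = Icc t x := uIcc_of_le htx
  have hgc : ContinuousOn g (Icc a b) := fun s hs => ((hg s hs).continuousAt).continuousWithinAt
  -- derivative of g/id
  have hγd : ∀ s ∈ Icc a b, HasDerivAt (fun s => g s / s) ((g' s * s - g s) / s ^ 2) s :=
    fun s hs => by have h := (hg s hs).div (hasDerivAt_id s) (hpos s hs).ne'; simp only [id, mul_one] at h; exact h
  set θ : ℝ → ℝ := fun s => (g' s * s - g s) / s ^ 2 with hθ
  have hθint : IntervalIntegrable θ volume t x := by
    have h1 : IntervalIntegrable (fun s => g' s * s - g s * 1) volume t x := by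
      have hg'tx : IntervalIntegrable g' volume t x := by
        apply hg'.mono_set
        rw [huIcc, uIcc_of_le hab]; exact hsubI
      have := hg'tx.mul_continuousOn (g := fun s => s) (by fun_prop)
      apply this.sub
      apply ContinuousOn.intervalIntegrable
      rw [huIcc]
      exact ((hgc.mono hsubI).mul continuousOn_const)
    have h2 := h1.mul_continuousOn (g := fun s => (s ^ 2)⁻¹) ?cont
    case cont =>
      apply ContinuousOn.inv₀ (by fun_prop)
      intro s hs
      rw [huIcc] at hs
      exact pow_ne_zero _ (hpos s (hsubI hs)).ne'
    simpa [hθ, div_eq_mul_inv] using h2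
  have hftc : g x / x - g t / t = ∫ s in t..x, θ s := by
    rw [intervalIntegral.integral_eq_sub_of_hasDerivAt (fun s hs => hγd s (hsubI (huIcc ▸ hs))) hθint]
  set N := ∫ s in a..b, |g s - s * g' s| with hN
  have habs : IntervalIntegrable (fun s => |g s - s * g' s|) volume a b := by
    apply IntervalIntegrable.abs
    have h1 : IntervalIntegrable (fun s => s * g' s) volume a b := by
      have := hg'.mul_continuousOn (g := fun s => s) (by fun_prop)
      simpa [mul_comm] using this
    exact (hgc.intervalIntegrable_of_Icc hab).sub h1
  -- |∫ θ| ≤ ∫ |θ| ≤ (1/t^2) ∫_t^x |g - ℓ g'| ≤ N / t^2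
  have step1 : |∫ s in t..x, θ s| ≤ ∫ s in t..x, |θ s| :=
    intervalIntegral.abs_integral_le_integral_abs htx
  have step2 : ∫ s in t..x, |θ s| ≤ ∫ s in t..x, |g s - s * g' s| / t ^ 2 := by
    apply intervalIntegral.integral_mono_on htx hθint.abs
    · apply IntervalIntegrable.div_const
      exact habs.mono_set (by rw [huIcc, uIcc_of_le hab]; exact hsubI)
    · intro s hs
      have hs' := hsubI hs
      have hs0 : 0 < s := hpos s hs'
      have e : |θ s| = |g s - s * g' s| / s ^ 2 := by
        rw [hθ, abs_div, abs_of_pos (by positivity : (0:ℝ) < s ^ 2)]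
        congr 1
        rw [abs_sub_comm]
        congr 1
        ring
      rw [e]
      apply div_le_div_of_nonneg_left (abs_nonneg _) (by positivity)
      · nlinarith [hs.1, ht0]
  have step3 : ∫ s in t..x, |g s - s * g' s| / t ^ 2 = (∫ s in t..x, |g s - s * g' s|) / t ^ 2 :=
    intervalIntegral.integral_div _ _
  have step4 : ∫ s in t..x, |g s - s * g' s| ≤ N := by
    have i1 : IntervalIntegrable (fun s => |g s - s * g' s|) volume a t :=
      habs.mono_set (by rw [uIcc_of_le hab, uIcc_of_le ht.1]; exact Icc_subset_Icc le_rfl ht.2)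
    have i2 : IntervalIntegrable (fun s => |g s - s * g' s|) volume t x :=
      habs.mono_set (by rw [uIcc_of_le hab, huIcc]; exact hsubI)
    have i3 : IntervalIntegrable (fun s => |g s - s * g' s|) volume x b :=
      habs.mono_set (by rw [uIcc_of_le hab, uIcc_of_le hx.2]; exact Icc_subset_Icc hx.1 le_rfl)
    have e1 : N = (∫ s in a..t, |g s - s * g' s|) + (∫ s in t..x, |g s - s * g' s|)
        + (∫ s in x..b, |g s - s * g' s|) := by
      rw [hN, ← intervalIntegral.integral_add_adjacent_intervals (i1.trans i2) i3,
        ← intervalIntegral.integral_add_adjacent_intervals i1 i2]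
    have n1 : 0 ≤ ∫ s in a..t, |g s - s * g' s| :=
      intervalIntegral.integral_nonneg ht.1 (fun s _ => abs_nonneg _)
    have n3 : 0 ≤ ∫ s in x..b, |g s - s * g' s| :=
      intervalIntegral.integral_nonneg hx.2 (fun s _ => abs_nonneg _)
    linarith
  -- combine
  have e : t * g x - x * g t = (t * x) * (g x / x - g t / t) := by field_simp
  have hN0 : (0:ℝ) ≤ N := intervalIntegral.integral_nonneg hab (fun s _ => abs_nonneg _)
  rw [e, abs_mul, abs_of_pos (mul_pos ht0 hx0), hftc]
  calc t * x * |∫ s in t..x, θ s| ≤ t * x * (N / t ^ 2) := by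
        apply mul_le_mul_of_nonneg_left _ (by positivity)
        calc |∫ s in t..x, θ s| ≤ ∫ s in t..x, |θ s| := step1
          _ ≤ (∫ s in t..x, |g s - s * g' s|) / t ^ 2 := by rw [← step3]; exact step2
          _ ≤ N / t ^ 2 := by gcongr
    _ = (x / t) * N := by field_simp

private lemma Keval (a b x : ℝ) (ha : 0 < a) (hx : x ∈ Icc a b) :
    ∫ t in a..b, |x - t| * (max x t / min x t)
      = x ^ 2 * (Real.log x - Real.log a) - x * (x - a)
        + ((b ^ 3 - x ^ 3) / (3 * x) - (b ^ 2 - x ^ 2) / 2) := by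
  have hax : a ≤ x := hx.1
  have hxb : x ≤ b := hx.2
  have hx0 : 0 < x := lt_of_lt_of_le ha hax
  have hcont1 : ContinuousOn (fun t => |x - t| * (max x t / min x t)) (Icc a b) := by
    apply ContinuousOn.mul (by fun_prop)
    apply ContinuousOn.div (by fun_prop) (by fun_prop)
    intro t ht
    exact (lt_min hx0 (lt_of_lt_of_le ha ht.1)).ne'
  have i1 : IntervalIntegrable (fun t => |x - t| * (max x t / min x t)) volume a x :=
    (hcont1.mono (Icc_subset_Icc le_rfl hxb)).intervalIntegrable_of_Icc hax
  have i2 : IntervalIntegrable (fun t => |x - t| * (max x t / min x t)) volume x b :=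
    (hcont1.mono (Icc_subset_Icc hax le_rfl)).intervalIntegrable_of_Icc hxb
  rw [← intervalIntegral.integral_add_adjacent_intervals i1 i2]
  have e1 : ∫ t in a..x, |x - t| * (max x t / min x t)
      = x ^ 2 * (Real.log x - Real.log a) - x * (x - a) := by
    have hcongr : ∫ t in a..x, |x - t| * (max x t / min x t)
        = ∫ t in a..x, x ^ 2 / t - x := by
      apply intervalIntegral.integral_congr
      intro t ht
      rw [uIcc_of_le hax] at ht
      have ht0 : 0 < t := lt_of_lt_of_le ha ht.1
      show |x - t| * (max x t / min x t) = x ^ 2 / t - x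
      rw [abs_of_nonneg (by linarith [ht.2] : (0:ℝ) ≤ x - t),
        max_eq_left ht.2, min_eq_right ht.2]
      field_simp
    have hder : ∀ t ∈ uIcc a x, HasDerivAt (fun t => x ^ 2 * Real.log t - x * t)
        (x ^ 2 / t - x) t := by
      intro t ht
      rw [uIcc_of_le hax] at ht
      have ht0 : t ≠ 0 := (lt_of_lt_of_le ha ht.1).ne'
      have h1 := ((Real.hasDerivAt_log ht0).const_mul (x ^ 2)).sub
        ((hasDerivAt_id t).const_mul x)
      refine h1.congr_deriv ?_
      field_simp
    have hint : IntervalIntegrable (fun t => x ^ 2 / t - x) volume a x := by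
      apply ContinuousOn.intervalIntegrable
      rw [uIcc_of_le hax]
      apply ContinuousOn.sub _ continuousOn_const
      exact ContinuousOn.div continuousOn_const (by fun_prop)
        (fun t ht => (lt_of_lt_of_le ha ht.1).ne')
    rw [hcongr, intervalIntegral.integral_eq_sub_of_hasDerivAt hder hint]
    ring
  have e2 : ∫ t in x..b, |x - t| * (max x t / min x t)
      = (b ^ 3 - x ^ 3) / (3 * x) - (b ^ 2 - x ^ 2) / 2 := by
    have hcongr : ∫ t in x..b, |x - t| * (max x t / min x t)
        = ∫ t in x..b, t ^ 2 / x - t := by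
      apply intervalIntegral.integral_congr
      intro t ht
      rw [uIcc_of_le hxb] at ht
      show |x - t| * (max x t / min x t) = t ^ 2 / x - t
      rw [abs_of_nonpos (by linarith [ht.1] : x - t ≤ 0),
        max_eq_right ht.1, min_eq_left ht.1]
      field_simp
      ring
    have hder : ∀ t ∈ uIcc x b, HasDerivAt (fun t => t ^ 3 / (3 * x) - t ^ 2 / 2)
        (t ^ 2 / x - t) t := by
      intro t _
      have h1 := ((hasDerivAt_pow 3 t).div_const (3 * x)).sub
        ((hasDerivAt_pow 2 t).div_const 2)
      refine h1.congr_deriv ?_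
      field_simp
      ring
    have hint : IntervalIntegrable (fun t => t ^ 2 / x - t) volume x b := by
      apply ContinuousOn.intervalIntegrable
      apply ContinuousOn.sub _ (by fun_prop)
      exact ContinuousOn.div (by fun_prop) (by fun_prop) (fun t _ => hx0.ne')
    rw [hcongr, intervalIntegral.integral_eq_sub_of_hasDerivAt hder hint]
    field_simp
    ring
  rw [e1, e2]

private lemma Kint (a b : ℝ) (ha : 0 < a) (hab : a < b) :
    ∫ x in a..b, (x ^ 2 * (Real.log x - Real.log a) - x * (x - a)
        + ((b ^ 3 - x ^ 3) / (3 * x) - (b ^ 2 - x ^ 2) / 2))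
      = b ^ 2 * a - (a ^ 3 + 8 * b ^ 3) / 9 + (2 / 3) * b ^ 3 * Real.log (b / a) := by
  have hb0 : 0 < b := ha.trans hab
  have hder : ∀ x ∈ uIcc a b, HasDerivAt (fun x => (x ^ 3 / 3) * (Real.log x - Real.log a)
        - x ^ 3 / 9 + (b ^ 3 / 3) * Real.log x - (5 / 18) * x ^ 3
        + a * x ^ 2 / 2 - b ^ 2 * x / 2)
      (x ^ 2 * (Real.log x - Real.log a) - x * (x - a)
        + ((b ^ 3 - x ^ 3) / (3 * x) - (b ^ 2 - x ^ 2) / 2)) x := by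
    intro x hxI
    rw [uIcc_of_le hab.le] at hxI
    have hx0 : 0 < x := lt_of_lt_of_le ha hxI.1
    have h1 : HasDerivAt (fun x : ℝ => (x ^ 3 / 3) * (Real.log x - Real.log a))
        ((3 * x ^ 2 / 3) * (Real.log x - Real.log a) + (x ^ 3 / 3) * (1 / x)) x := by
      have := ((hasDerivAt_pow 3 x).div_const 3).mul
        ((Real.hasDerivAt_log hx0.ne').sub_const (Real.log a))
      refine this.congr_deriv ?_
      simp
    have h2 := ((((h1.sub ((hasDerivAt_pow 3 x).div_const 9)).add
      ((Real.hasDerivAt_log hx0.ne').const_mul (b ^ 3 / 3))).sub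
      ((hasDerivAt_pow 3 x).const_mul (5 / 18))).add
      (((hasDerivAt_pow 2 x).const_mul a).div_const 2)).sub
      (((hasDerivAt_id x).const_mul (b ^ 2)).div_const 2)
    refine h2.congr_deriv ?_
    field_simp
    ring
  rw [intervalIntegral.integral_eq_sub_of_hasDerivAt hder ?_]
  · have : Real.log (b / a) = Real.log b - Real.log a := Real.log_div hb0.ne' ha.ne'
    rw [this]
    ring
  · apply ContinuousOn.intervalIntegrable
    rw [uIcc_of_le hab.le]
    have hne : ∀ x ∈ Icc a b, x ≠ 0 := fun x hx => (lt_of_lt_of_le ha hx.1).ne'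
    apply ContinuousOn.add
    · apply ContinuousOn.sub _ (by fun_prop)
      apply ContinuousOn.mul (by fun_prop)
      exact ContinuousOn.sub
        (Real.continuousOn_log.mono (by intro x hx; simpa using hne x hx)) continuousOn_const
    · apply ContinuousOn.sub _ (by fun_prop)
      exact ContinuousOn.div (by fun_prop) (by fun_prop)
        (fun x hx => by have := hne x hx; positivity)

private lemma inner_expand (a b : ℝ) (hab : a ≤ b) (f g : ℝ → ℝ)
    (hfc : ContinuousOn f (Icc a b)) (hgc : ContinuousOn g (Icc a b)) (x : ℝ) :
    ∫ t in a..b, (t * f x - x * f t) * (t * g x - x * g t)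
      = f x * g x * ((b ^ 3 - a ^ 3) / 3) - x * g x * (∫ t in a..b, t * f t)
        - x * f x * (∫ t in a..b, t * g t) + x ^ 2 * ∫ t in a..b, f t * g t := by
  have itf : IntervalIntegrable (fun t => t * f t) volume a b :=
    (continuous_id.continuousOn.mul hfc).intervalIntegrable_of_Icc hab
  have itg : IntervalIntegrable (fun t => t * g t) volume a b :=
    (continuous_id.continuousOn.mul hgc).intervalIntegrable_of_Icc hab
  have ifg : IntervalIntegrable (fun t => f t * g t) volume a b :=
    (hfc.mul hgc).intervalIntegrable_of_Icc hab
  have A1 : IntervalIntegrable (fun t : ℝ => (f x * g x) * t ^ 2) volume a b :=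
    (continuous_const.mul (continuous_pow 2)).intervalIntegrable _ _
  have A2 : IntervalIntegrable (fun t => (x * g x) * (t * f t)) volume a b :=
    itf.const_mul _
  have A3 : IntervalIntegrable (fun t => (x * f x) * (t * g t)) volume a b :=
    itg.const_mul _
  have A4 : IntervalIntegrable (fun t => x ^ 2 * (f t * g t)) volume a b :=
    ifg.const_mul _
  calc ∫ t in a..b, (t * f x - x * f t) * (t * g x - x * g t)
      = ∫ t in a..b, ((f x * g x) * t ^ 2 - (x * g x) * (t * f t)
          - (x * f x) * (t * g t) + x ^ 2 * (f t * g t)) :=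
        intervalIntegral.integral_congr (fun t _ => by ring)
    _ = _ := by
        rw [intervalIntegral.integral_add ((A1.sub A2).sub A3) A4,
          intervalIntegral.integral_sub (A1.sub A2) A3,
          intervalIntegral.integral_sub A1 A2,
          intervalIntegral.integral_const_mul, intervalIntegral.integral_const_mul,
          intervalIntegral.integral_const_mul, intervalIntegral.integral_const_mul,
          integral_pow]
        push_cast
        ring

theorem pompeiu_chebyshev_inf_one_bound (a b : ℝ) (ha : 0 < a) (hab : a < b)
    (f g f' g' : ℝ → ℝ)
    (hf : ∀ x ∈ Set.Icc a b, HasDerivAt f (f' x) x)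
    (hg : ∀ x ∈ Set.Icc a b, HasDerivAt g (g' x) x)
    (hf' : ∃ C, ∀ x ∈ Set.Icc a b, |f' x| ≤ C)
    (hg' : IntervalIntegrable g' MeasureTheory.volume a b) :
    |(b ^ 3 - a ^ 3) / 3 * (∫ x in a..b, f x * g x) -
        (∫ x in a..b, x * f x) * ∫ x in a..b, x * g x| ≤
      (1 / 2) * (b ^ 2 * a - (a ^ 3 + 8 * b ^ 3) / 9 + (2 / 3) * b ^ 3 * Real.log (b / a)) *
        sSup ((fun t => |f t - t * f' t|) '' Set.Icc a b) *
        ∫ t in a..b, |g t - t * g' t| := by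
  have hab' : a ≤ b := hab.le
  have hpos : ∀ s ∈ Icc a b, 0 < s := fun s hs => lt_of_lt_of_le ha hs.1
  have hfc : ContinuousOn f (Icc a b) := fun s hs => ((hf s hs).continuousAt).continuousWithinAt
  have hgc : ContinuousOn g (Icc a b) := fun s hs => ((hg s hs).continuousAt).continuousWithinAt
  set M := sSup ((fun t => |f t - t * f' t|) '' Icc a b) with hMdef
  set N := ∫ t in a..b, |g t - t * g' t| with hNdef
  obtain ⟨C, hC⟩ := hf'
  obtain ⟨D, hD⟩ := isCompact_Icc.exists_bound_of_continuousOn hfc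
  have hC0 : 0 ≤ C := (abs_nonneg _).trans (hC a ⟨le_rfl, hab'⟩)
  have hbdd : BddAbove ((fun t => |f t - t * f' t|) '' Icc a b) := by
    refine ⟨D + b * C, ?_⟩
    rintro y ⟨s, hs, rfl⟩
    have h1 : |f s| ≤ D := by simpa using hD s hs
    have h2 : |f' s| ≤ C := hC s hs
    have h3 : 0 < s := hpos s hs
    have h4 : |s * f' s| ≤ b * C := by
      rw [abs_mul, abs_of_pos h3]
      exact mul_le_mul hs.2 h2 (abs_nonneg _) (by linarith [ha.le.trans hab'])
    calc |f s - s * f' s| ≤ |f s| + |s * f' s| := abs_sub _ _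
      _ ≤ D + b * C := add_le_add h1 h4
  have hM : ∀ s ∈ Icc a b, |f s - s * f' s| ≤ M := fun s hs => le_csSup hbdd ⟨s, hs, rfl⟩
  have hM0 : 0 ≤ M := le_trans (abs_nonneg _) (hM a ⟨le_rfl, hab'⟩)
  have hN0 : 0 ≤ N := intervalIntegral.integral_nonneg hab' (fun s _ => abs_nonneg _)
  have hgcross : ∀ t ∈ Icc a b, ∀ x ∈ Icc a b,
      |t * g x - x * g t| ≤ (max x t / min x t) * N := by
    intro t ht x hx
    rcases le_total t x with h | h
    · have := g_cross_bound_le a b ha g g' hg hg' ht hx h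
      rwa [max_eq_left h, min_eq_right h]
    · have := g_cross_bound_le a b ha g g' hg hg' hx ht h
      rw [max_eq_right h, min_eq_left h, abs_sub_comm]
      exact this
  set c := (b ^ 3 - a ^ 3) / 3 with hc
  set If := ∫ x in a..b, x * f x with hIf
  set Ig := ∫ x in a..b, x * g x with hIg
  set Ifg := ∫ x in a..b, f x * g x with hIfg
  set K : ℝ → ℝ := fun x => x ^ 2 * (Real.log x - Real.log a) - x * (x - a)
    + ((b ^ 3 - x ^ 3) / (3 * x) - (b ^ 2 - x ^ 2) / 2) with hKdef
  set Fc : ℝ → ℝ := fun x => f x * g x * c - x * g x * If - x * f x * Ig + x ^ 2 * Ifg with hFcdef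
  have hFceq : ∀ x ∈ Icc a b,
      (∫ t in a..b, (t * f x - x * f t) * (t * g x - x * g t)) = Fc x :=
    fun x _ => inner_expand a b hab' f g hfc hgc x
  have hFccont : ContinuousOn Fc (Icc a b) := by
    apply ContinuousOn.add
    apply ContinuousOn.sub
    apply ContinuousOn.sub
    · exact (hfc.mul hgc).mul continuousOn_const
    · exact (continuous_id.continuousOn.mul hgc).mul continuousOn_const
    · exact (continuous_id.continuousOn.mul hfc).mul continuousOn_const
    · exact (continuous_pow 2).continuousOn.mul continuousOn_const
  have hKcont : ContinuousOn K (Icc a b) := by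
    have hne : ∀ x ∈ Icc a b, x ≠ 0 := fun x hx => (hpos x hx).ne'
    apply ContinuousOn.add
    · apply ContinuousOn.sub _ (by fun_prop)
      apply ContinuousOn.mul (by fun_prop)
      exact ContinuousOn.sub
        (Real.continuousOn_log.mono (by intro x hx; simpa using hne x hx)) continuousOn_const
    · apply ContinuousOn.sub _ (by fun_prop)
      exact ContinuousOn.div (by fun_prop) (by fun_prop)
        (fun x hx => by have := hne x hx; positivity)
  -- outer integral identity
  have hFcint : ∫ x in a..b, Fc x = 2 * (c * Ifg - If * Ig) := by
    have itf : IntervalIntegrable (fun t => t * f t) volume a b :=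
      (continuous_id.continuousOn.mul hfc).intervalIntegrable_of_Icc hab'
    have itg : IntervalIntegrable (fun t => t * g t) volume a b :=
      (continuous_id.continuousOn.mul hgc).intervalIntegrable_of_Icc hab'
    have ifg : IntervalIntegrable (fun t => f t * g t) volume a b :=
      (hfc.mul hgc).intervalIntegrable_of_Icc hab'
    have A1 : IntervalIntegrable (fun x => f x * g x * c) volume a b := ifg.mul_const _
    have A2 : IntervalIntegrable (fun x => x * g x * If) volume a b := itg.mul_const _
    have A3 : IntervalIntegrable (fun x => x * f x * Ig) volume a b := itf.mul_const _
    have A4 : IntervalIntegrable (fun x : ℝ => x ^ 2 * Ifg) volume a b :=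
      ((continuous_pow 2).intervalIntegrable _ _).mul_const _
    rw [hFcdef]
    rw [intervalIntegral.integral_add ((A1.sub A2).sub A3) A4,
      intervalIntegral.integral_sub (A1.sub A2) A3,
      intervalIntegral.integral_sub A1 A2,
      intervalIntegral.integral_mul_const, intervalIntegral.integral_mul_const,
      intervalIntegral.integral_mul_const, intervalIntegral.integral_mul_const,
      integral_pow]
    rw [← hIf, ← hIg, ← hIfg]
    push_cast
    rw [hc]
    ring
  -- pointwise bound on Fc
  have hbound : ∀ x ∈ Icc a b, |Fc x| ≤ M * N * K x := by
    intro x hx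
    rw [← hFceq x hx]
    have hintc : ContinuousOn (fun t => (t * f x - x * f t) * (t * g x - x * g t)) (Icc a b) := by
      apply ContinuousOn.mul
      · exact (continuous_id.continuousOn.mul continuousOn_const).sub (continuousOn_const.mul hfc)
      · exact (continuous_id.continuousOn.mul continuousOn_const).sub (continuousOn_const.mul hgc)
    have hwcont : ContinuousOn (fun t => (M * N) * (|x - t| * (max x t / min x t))) (Icc a b) := by
      apply ContinuousOn.mul continuousOn_const
      apply ContinuousOn.mul (by fun_prop)
      apply ContinuousOn.div (by fun_prop) (by fun_prop)
      intro t ht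
      exact (lt_min (hpos x hx) (hpos t ht)).ne'
    calc |∫ t in a..b, (t * f x - x * f t) * (t * g x - x * g t)|
        ≤ ∫ t in a..b, |(t * f x - x * f t) * (t * g x - x * g t)| :=
          intervalIntegral.abs_integral_le_integral_abs hab'
      _ ≤ ∫ t in a..b, (M * N) * (|x - t| * (max x t / min x t)) := by
          apply intervalIntegral.integral_mono_on hab'
            (hintc.abs.intervalIntegrable_of_Icc hab')
            (hwcont.intervalIntegrable_of_Icc hab')
          intro t ht
          calc |(t * f x - x * f t) * (t * g x - x * g t)|
              = |t * f x - x * f t| * |t * g x - x * g t| := abs_mul _ _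
            _ ≤ (M * |x - t|) * ((max x t / min x t) * N) := by
                apply mul_le_mul (f_cross_bound a b M ha f f' hf hM ht hx)
                  (hgcross t ht x hx) (abs_nonneg _) (by positivity)
            _ = (M * N) * (|x - t| * (max x t / min x t)) := by ring
      _ = (M * N) * K x := by
          rw [intervalIntegral.integral_const_mul, Keval a b x ha hx]
  -- final chain
  have hKint2 : ∫ x in a..b, (M * N) * K x
      = (M * N) * (b ^ 2 * a - (a ^ 3 + 8 * b ^ 3) / 9 + (2 / 3) * b ^ 3 * Real.log (b / a)) := by
    rw [intervalIntegral.integral_const_mul, Kint a b ha hab]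
  have step : |c * Ifg - If * Ig| ≤ (1 / 2) *
      ((M * N) * (b ^ 2 * a - (a ^ 3 + 8 * b ^ 3) / 9 + (2 / 3) * b ^ 3 * Real.log (b / a))) := by
    have e1 : |c * Ifg - If * Ig| = (1 / 2) * |∫ x in a..b, Fc x| := by
      rw [hFcint, abs_mul, abs_two]
      ring
    rw [e1]
    apply mul_le_mul_of_nonneg_left _ (by norm_num : (0:ℝ) ≤ 1/2)
    calc |∫ x in a..b, Fc x| ≤ ∫ x in a..b, |Fc x| :=
          intervalIntegral.abs_integral_le_integral_abs hab'
      _ ≤ ∫ x in a..b, (M * N) * K x := by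
          apply intervalIntegral.integral_mono_on hab'
            (hFccont.abs.intervalIntegrable_of_Icc hab')
            ((continuousOn_const.mul hKcont).intervalIntegrable_of_Icc hab')
          intro x hx
          simpa [mul_assoc] using hbound x hx
      _ = _ := hKint2
  calc |c * Ifg - If * Ig| ≤ _ := step
    _ = (1 / 2) * (b ^ 2 * a - (a ^ 3 + 8 * b ^ 3) / 9 + (2 / 3) * b ^ 3 * Real.log (b / a))
        * M * N := by ring
end

section
/- Let [a,b] be an interval, and let f, h : [a,b] → ℝ be differentiable with h(x) ≠ 0 and h'(x) ≠ 0 for all x ∈ [a,b]. Then for all distinct x₁, x₂ ∈ [a,b] with h(x₁) ≠ h(x₂), there exists ξ strictly between x₁ and x₂ such that (h(x₁)f(x₂) − h(x₂)f(x₁))/(h(x₁) − h(x₂)) = f(ξ) − (h(ξ)/h'(ξ))·f'(ξ). -/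
theorem boggio_aux (a b : ℝ) (f h : ℝ → ℝ)
    (hf : ∀ x ∈ Set.Icc a b, DifferentiableAt ℝ f x)
    (hh : ∀ x ∈ Set.Icc a b, DifferentiableAt ℝ h x)
    (hh0 : ∀ x ∈ Set.Icc a b, h x ≠ 0)
    (hh'0 : ∀ x ∈ Set.Icc a b, deriv h x ≠ 0)
    (y₁ y₂ : ℝ) (hy₁ : y₁ ∈ Set.Icc a b) (hy₂ : y₂ ∈ Set.Icc a b)
    (hlt : y₁ < y₂) (hhne : h y₁ ≠ h y₂) :
    ∃ ξ ∈ Set.Ioo y₁ y₂,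
      (h y₁ * f y₂ - h y₂ * f y₁) / (h y₁ - h y₂) =
        f ξ - (h ξ / deriv h ξ) * deriv f ξ := by
  have hsub : Set.Icc y₁ y₂ ⊆ Set.Icc a b :=
    Set.Icc_subset_Icc hy₁.1 hy₂.2
  set F : ℝ → ℝ := fun x => f x / h x with hF
  set F' : ℝ → ℝ := fun x => (deriv f x * h x - f x * deriv h x) / (h x) ^ 2 with hF'
  set G : ℝ → ℝ := fun x => (h x)⁻¹ with hG
  set G' : ℝ → ℝ := fun x => -deriv h x / (h x) ^ 2 with hG'
  have hFd : ∀ x ∈ Set.Icc a b, HasDerivAt F (F' x) x := fun x hx =>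
    ((hf x hx).hasDerivAt).div ((hh x hx).hasDerivAt) (hh0 x hx)
  have hGd : ∀ x ∈ Set.Icc a b, HasDerivAt G (G' x) x := fun x hx =>
    ((hh x hx).hasDerivAt).inv (hh0 x hx)
  obtain ⟨c, hc, heq⟩ := exists_ratio_hasDerivAt_eq_ratio_slope F F' hlt
    (fun x hx => (hFd x (hsub hx)).continuousAt.continuousWithinAt)
    (fun x hx => hFd x (hsub (Set.mem_Icc_of_Ioo hx)))
    G G'
    (fun x hx => (hGd x (hsub hx)).continuousAt.continuousWithinAt)
    (fun x hx => hGd x (hsub (Set.mem_Icc_of_Ioo hx)))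
  refine ⟨c, hc, ?_⟩
  have hcab : c ∈ Set.Icc a b := hsub (Set.mem_Icc_of_Ioo hc)
  have h1 := hh0 y₁ hy₁
  have h2 := hh0 y₂ hy₂
  have h3 := hh0 c hcab
  have h4 := hh'0 c hcab
  have h5 : h y₁ - h y₂ ≠ 0 := sub_ne_zero.mpr hhne
  simp only [hF, hF', hG, hG'] at heq
  field_simp at heq ⊢
  nlinarith [heq, sq_nonneg (h c)]

theorem boggio_mvt (a b : ℝ) (hab : a < b) (f h : ℝ → ℝ)
    (hf : ∀ x ∈ Set.Icc a b, DifferentiableAt ℝ f x)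
    (hh : ∀ x ∈ Set.Icc a b, DifferentiableAt ℝ h x)
    (hh0 : ∀ x ∈ Set.Icc a b, h x ≠ 0)
    (hh'0 : ∀ x ∈ Set.Icc a b, deriv h x ≠ 0)
    (x₁ x₂ : ℝ) (hx₁ : x₁ ∈ Set.Icc a b) (hx₂ : x₂ ∈ Set.Icc a b)
    (hne : x₁ ≠ x₂) (hhne : h x₁ ≠ h x₂) :
    ∃ ξ ∈ Set.Ioo (min x₁ x₂) (max x₁ x₂),
      (h x₁ * f x₂ - h x₂ * f x₁) / (h x₁ - h x₂) =
        f ξ - (h ξ / deriv h ξ) * deriv f ξ := by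
  rcases hne.lt_or_gt with hlt | hlt
  · rw [min_eq_left hlt.le, max_eq_right hlt.le]
    exact boggio_aux a b f h hf hh hh0 hh'0 x₁ x₂ hx₁ hx₂ hlt hhne
  · rw [min_eq_right hlt.le, max_eq_left hlt.le]
    obtain ⟨c, hc, heq⟩ := boggio_aux a b f h hf hh hh0 hh'0 x₂ x₁ hx₂ hx₁ hlt hhne.symm
    refine ⟨c, hc, ?_⟩
    rw [← heq]
    rw [show h x₁ * f x₂ - h x₂ * f x₁ = -(h x₂ * f x₁ - h x₁ * f x₂) by ring,
        show h x₁ - h x₂ = -(h x₂ - h x₁) by ring, neg_div_neg_eq]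
end

section
/- Let a < b and let f, g, h : [a,b] → ℝ be integrable. Then ∫_a^b h²(x) dx · ∫_a^b f(t)g(t) dt − (∫_a^b f h)·(∫_a^b h g) = (1/2)·∫_a^b ∫_a^b (h(x)f(t) − h(t)f(x))·(h(x)g(t) − h(t)g(x)) dt dx. -/
theorem generalized_pompeiu_chebyshev_repr (a b : ℝ) (hab : a < b) (f g h : ℝ → ℝ)
    (hf : IntervalIntegrable f MeasureTheory.volume a b)
    (hg : IntervalIntegrable g MeasureTheory.volume a b)
    (hh : IntervalIntegrable h MeasureTheory.volume a b)
    (hfg : IntervalIntegrable (fun x => f x * g x) MeasureTheory.volume a b)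
    (hh2 : IntervalIntegrable (fun x => h x ^ 2) MeasureTheory.volume a b)
    (hfh : IntervalIntegrable (fun x => f x * h x) MeasureTheory.volume a b)
    (hhg : IntervalIntegrable (fun x => h x * g x) MeasureTheory.volume a b) :
    (∫ x in a..b, h x ^ 2) * (∫ t in a..b, f t * g t) -
        (∫ t in a..b, f t * h t) * ∫ x in a..b, h x * g x =
      (1 / 2) * ∫ x in a..b, ∫ t in a..b,
        (h x * f t - h t * f x) * (h x * g t - h t * g x) := by
  set I1 := ∫ t in a..b, f t * g t with hI1
  set I2 := ∫ t in a..b, f t * h t with hI2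
  set I3 := ∫ t in a..b, h t * g t with hI3
  set I4 := ∫ t in a..b, h t ^ 2 with hI4
  have key : ∀ x : ℝ, (∫ t in a..b,
      (h x * f t - h t * f x) * (h x * g t - h t * g x)) =
      h x ^ 2 * I1 - (h x * g x) * I2 - (h x * f x) * I3 + (f x * g x) * I4 := by
    intro x
    have heq : (fun t => (h x * f t - h t * f x) * (h x * g t - h t * g x)) =
        fun t => h x ^ 2 * (f t * g t) - (h x * g x) * (f t * h t)
          - (h x * f x) * (h t * g t) + (f x * g x) * (h t ^ 2) := by
      funext t; ring
    rw [heq,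
      intervalIntegral.integral_add ((hfg.const_mul _).sub (hfh.const_mul _) |>.sub
        (hhg.const_mul _)) (hh2.const_mul _),
      intervalIntegral.integral_sub ((hfg.const_mul _).sub (hfh.const_mul _))
        (hhg.const_mul _),
      intervalIntegral.integral_sub (hfg.const_mul _) (hfh.const_mul _),
      intervalIntegral.integral_const_mul, intervalIntegral.integral_const_mul,
      intervalIntegral.integral_const_mul, intervalIntegral.integral_const_mul]
  have hhf : IntervalIntegrable (fun x => h x * f x) MeasureTheory.volume a b := by
    simpa [mul_comm] using hfh
  have houter : (∫ x in a..b, ∫ t in a..b,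
      (h x * f t - h t * f x) * (h x * g t - h t * g x)) =
      ∫ x in a..b, (h x ^ 2 * I1 - (h x * g x) * I2 - (h x * f x) * I3 + (f x * g x) * I4) := by
    exact intervalIntegral.integral_congr fun x _ => key x
  rw [houter,
    intervalIntegral.integral_add ((hh2.mul_const _).sub (hhg.mul_const _) |>.sub
      (hhf.mul_const _))
      (hfg.mul_const _),
    intervalIntegral.integral_sub ((hh2.mul_const _).sub (hhg.mul_const _))
      (hhf.mul_const _),
    intervalIntegral.integral_sub (hh2.mul_const _) (hhg.mul_const _),
    intervalIntegral.integral_mul_const, intervalIntegral.integral_mul_const,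
    intervalIntegral.integral_mul_const, intervalIntegral.integral_mul_const]
  have h1 : (∫ x in a..b, h x * f x) = I2 := by
    rw [hI2]; exact intervalIntegral.integral_congr fun x _ => mul_comm (h x) (f x)
  rw [h1]
  show I4 * I1 - I2 * I3 = 1 / 2 * (I4 * I1 - I3 * I2 - I2 * I3 + I1 * I4)
  ring
end

section
/- Let a < b, let h : [a,b] → ℝ be nonnegative and integrable, and suppose there exist constants M ≥ m > 0 and N ≥ n > 0 with m·h(x) ≤ f(x) ≤ M·h(x) and n·h(x) ≤ g(x) ≤ N·h(x) for a.e. x ∈ [a,b]. Then |∫_a^b h² · ∫_a^b fg − (∫_a^b fh)(∫_a^b hg)| ≤ (1/4)·((M−m)/√(mM))·((N−n)/√(Nn))·|∫_a^b h f|·|∫_a^b h g|. -/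
open MeasureTheory

private lemma quad_disc (A B C : ℝ) (h : ∀ t : ℝ, 0 ≤ A*t^2 + 2*B*t + C) : B^2 ≤ A*C := by
  have hd := discrim_le_zero (a := A) (b := 2*B) (c := C) (fun t => by linarith [h t])
  rw [discrim] at hd; nlinarith [hd]

set_option maxHeartbeats 1000000 in
private lemma combine (H2 F2 G2 FG HF HG M m N n : ℝ)
    (hm : 0 < m) (hmM : m ≤ M) (hn : 0 < n) (hnN : n ≤ N)
    (sqnn : ∀ p q r : ℝ, 0 ≤ p^2*H2 + q^2*F2 + r^2*G2 + 2*p*q*HF + 2*p*r*HG + 2*q*r*FG)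
    (hHFnn : 0 ≤ HF) (hHGnn : 0 ≤ HG)
    (casF : F2 + m*M*H2 ≤ (M+m)*HF) (casG : G2 + n*N*H2 ≤ (N+n)*HG) :
    |H2*FG - HF*HG| ≤
      (1/4)*((M-m)/Real.sqrt (m*M))*((N-n)/Real.sqrt (N*n)) * |HF| * |HG| := by
  have hM : 0 < M := hm.trans_le hmM
  have hN : 0 < N := hn.trans_le hnN
  have hmM4 : (0:ℝ) < 4*m*M := by positivity
  have hnN4 : (0:ℝ) < 4*n*N := by positivity
  have cbsF : HF^2 ≤ H2 * F2 := by
    refine quad_disc H2 HF F2 fun t => ?_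
    linarith [sqnn t 1 0]
  have cbsB : (H2*FG - HF*HG)^2 ≤ (H2*G2 - HG^2) * (H2*F2 - HF^2) := by
    refine quad_disc _ _ _ fun t => ?_
    have key : (HF + t*HG)^2 ≤ H2 * (F2 + 2*t*FG + t^2*G2) := by
      refine quad_disc H2 (HF + t*HG) (F2 + 2*t*FG + t^2*G2) fun s => ?_
      linarith [sqnn s 1 t]
    nlinarith [key]
  have hH2nn : 0 ≤ H2 := by linarith [sqnn 1 0 0]
  have hF2nn : 0 ≤ F2 := by linarith [sqnn 0 1 0]
  have hG2nn : 0 ≤ G2 := by linarith [sqnn 0 0 1]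
  have bndF : H2*F2 - HF^2 ≤ (M-m)^2/(4*m*M) * HF^2 := by
    rw [div_mul_eq_mul_div, le_div_iff₀ hmM4]
    have h0 : 0 ≤ F2 + m*M*H2 :=
      add_nonneg hF2nn (mul_nonneg (mul_nonneg hm.le hM.le) hH2nn)
    have h1 : (F2 + m*M*H2)^2 ≤ ((M+m)*HF)^2 := by
      have := mul_self_le_mul_self h0 casF
      nlinarith [this]
    nlinarith [h1, sq_nonneg (F2 - m*M*H2)]
  have bndG : H2*G2 - HG^2 ≤ (N-n)^2/(4*n*N) * HG^2 := by
    rw [div_mul_eq_mul_div, le_div_iff₀ hnN4]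
    have h0 : 0 ≤ G2 + n*N*H2 :=
      add_nonneg hG2nn (mul_nonneg (mul_nonneg hn.le hN.le) hH2nn)
    have h1 : (G2 + n*N*H2)^2 ≤ ((N+n)*HG)^2 := by
      have := mul_self_le_mul_self h0 casG
      nlinarith [this]
    nlinarith [h1, sq_nonneg (G2 - n*N*H2)]
  have s1 : (0:ℝ) < Real.sqrt (m*M) := Real.sqrt_pos.2 (by positivity)
  have s2 : (0:ℝ) < Real.sqrt (N*n) := Real.sqrt_pos.2 (by positivity)
  have hs1 : Real.sqrt (m*M) ^ 2 = m*M := Real.sq_sqrt (by positivity)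
  have hs2 : Real.sqrt (N*n) ^ 2 = N*n := Real.sq_sqrt (by positivity)
  have hRnn : 0 ≤ (1/4)*((M-m)/Real.sqrt (m*M))*((N-n)/Real.sqrt (N*n)) * |HF| * |HG| := by
    have h1 : 0 ≤ (M-m)/Real.sqrt (m*M) := div_nonneg (by linarith) s1.le
    have h2 : 0 ≤ (N-n)/Real.sqrt (N*n) := div_nonneg (by linarith) s2.le
    have : (0:ℝ) ≤ 1/4 := by norm_num
    exact mul_nonneg (mul_nonneg (mul_nonneg (mul_nonneg this h1) h2) (abs_nonneg _))
      (abs_nonneg _)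
  have eaF : ((M-m)/Real.sqrt (m*M))^2 = (M-m)^2/(m*M) := by rw [div_pow, hs1]
  have eaG : ((N-n)/Real.sqrt (N*n))^2 = (N-n)^2/(N*n) := by rw [div_pow, hs2]
  have hRsq : ((M-m)^2/(4*m*M) * HF^2) * ((N-n)^2/(4*n*N) * HG^2)
      = ((1/4)*((M-m)/Real.sqrt (m*M))*((N-n)/Real.sqrt (N*n)) * |HF| * |HG|)^2 := by
    have eR : ((1/4)*((M-m)/Real.sqrt (m*M))*((N-n)/Real.sqrt (N*n)) * |HF| * |HG|)^2
        = (1/16) * (((M-m)/Real.sqrt (m*M))^2) *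
          (((N-n)/Real.sqrt (N*n))^2) * |HF|^2 * |HG|^2 := by
      ring
    rw [eR, eaF, eaG, sq_abs, sq_abs]
    field_simp [hm.ne', hM.ne', hn.ne', hN.ne']
    ring
  have hfinal : (H2*FG - HF*HG)^2
      ≤ ((1/4)*((M-m)/Real.sqrt (m*M))*((N-n)/Real.sqrt (N*n)) * |HF| * |HG|)^2 := by
    rw [← hRsq]
    calc (H2*FG - HF*HG)^2 ≤ (H2*G2 - HG^2) * (H2*F2 - HF^2) := cbsB
      _ ≤ ((N-n)^2/(4*n*N) * HG^2) * ((M-m)^2/(4*m*M) * HF^2) := by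
          refine mul_le_mul bndG bndF (by linarith [cbsF])
            (mul_nonneg (div_nonneg (sq_nonneg _) hnN4.le) (sq_nonneg _))
      _ = ((M-m)^2/(4*m*M) * HF^2) * ((N-n)^2/(4*n*N) * HG^2) := by ring
  have hle := Real.sqrt_le_sqrt hfinal
  rwa [Real.sqrt_sq_eq_abs, Real.sqrt_sq hRnn] at hle

theorem reverse_cbs_pompeiu_chebyshev (a b : ℝ) (hab : a < b) (f g h : ℝ → ℝ)
    (hh0 : ∀ x ∈ Set.Icc a b, 0 ≤ h x)
    (hh : IntervalIntegrable h MeasureTheory.volume a b)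
    (hf : Measurable f) (hg : Measurable g)
    (M m N n : ℝ) (hm : 0 < m) (hmM : m ≤ M) (hn : 0 < n) (hnN : n ≤ N)
    (hfb : ∀ᵐ x ∂(MeasureTheory.volume.restrict (Set.Icc a b)),
      m * h x ≤ f x ∧ f x ≤ M * h x)
    (hgb : ∀ᵐ x ∂(MeasureTheory.volume.restrict (Set.Icc a b)),
      n * h x ≤ g x ∧ g x ≤ N * h x) :
    |(∫ x in a..b, h x ^ 2) * (∫ x in a..b, f x * g x) -
        (∫ x in a..b, f x * h x) * ∫ x in a..b, h x * g x| ≤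
      (1 / 4) * ((M - m) / Real.sqrt (m * M)) * ((N - n) / Real.sqrt (N * n)) *
        |∫ x in a..b, h x * f x| * |∫ x in a..b, h x * g x| := by
  set μ := MeasureTheory.volume.restrict (Set.Ioc a b) with hμ
  -- a.e. bounds on Ioc
  have hsub : Set.Ioc a b ⊆ Set.Icc a b := Set.Ioc_subset_Icc_self
  have hfb' : ∀ᵐ x ∂μ, m * h x ≤ f x ∧ f x ≤ M * h x :=
    ae_restrict_of_ae_restrict_of_subset hsub hfb
  have hgb' : ∀ᵐ x ∂μ, n * h x ≤ g x ∧ g x ≤ N * h x :=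
    ae_restrict_of_ae_restrict_of_subset hsub hgb
  have hh0' : ∀ᵐ x ∂μ, 0 ≤ h x := by
    refine (ae_restrict_iff' measurableSet_Ioc).2 (Filter.Eventually.of_forall ?_)
    exact fun x hx => hh0 x (hsub hx)
  have hP : ∀ᵐ x ∂μ, 0 ≤ h x ∧ (m * h x ≤ f x ∧ f x ≤ M * h x) ∧
      (n * h x ≤ g x ∧ g x ≤ N * h x) := by
    filter_upwards [hh0', hfb', hgb'] with x h1 h2 h3; exact ⟨h1, h2, h3⟩
  have hhae : AEStronglyMeasurable h μ := hh.1.aestronglyMeasurable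
  have hh2m : AEStronglyMeasurable (fun x => h x ^ 2) μ := by
    exact hhae.pow 2
  have hfm : AEStronglyMeasurable f μ := hf.aestronglyMeasurable
  have hgm : AEStronglyMeasurable g μ := hg.aestronglyMeasurable
  -- notation for integrals over Ioc
  by_cases ih2 : IntervalIntegrable (fun x => h x ^ 2) MeasureTheory.volume a b
  · -- main case
    have ih2' : Integrable (fun x => h x ^ 2) μ :=
      (intervalIntegrable_iff_integrableOn_Ioc_of_le hab.le).1 ih2
    -- a generic domination lemma
    have dom : ∀ (u : ℝ → ℝ), AEStronglyMeasurable u μ → ∀ C : ℝ,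
        (∀ᵐ x ∂μ, |u x| ≤ C * h x ^ 2) → Integrable u μ := by
      intro u hu C hb
      exact (ih2'.const_mul C).mono' hu (by simpa [Real.norm_eq_abs] using hb)
    have iF2 : Integrable (fun x => f x ^ 2) μ := by
      refine dom _ (hfm.pow 2) (M^2) ?_
      filter_upwards [hP] with x ⟨h0, ⟨hf1, hf2⟩, _⟩
      have h1 : 0 ≤ f x := le_trans (by positivity) hf1
      rw [abs_of_nonneg (by positivity)]
      calc f x ^ 2 ≤ (M * h x)^2 := by nlinarith
        _ = M^2 * h x ^2 := by ring
    have iG2 : Integrable (fun x => g x ^ 2) μ := by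
      refine dom _ (hgm.pow 2) (N^2) ?_
      filter_upwards [hP] with x ⟨h0, _, ⟨hg1, hg2⟩⟩
      have h1 : 0 ≤ g x := le_trans (by positivity) hg1
      rw [abs_of_nonneg (by positivity)]
      calc g x ^ 2 ≤ (N * h x)^2 := by nlinarith
        _ = N^2 * h x ^2 := by ring
    have iFG : Integrable (fun x => f x * g x) μ := by
      refine dom _ (hfm.mul hgm) (M*N) ?_
      filter_upwards [hP] with x ⟨h0, ⟨hf1, hf2⟩, ⟨hg1, hg2⟩⟩
      have h1 : 0 ≤ f x := le_trans (by positivity) hf1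
      have h2 : 0 ≤ g x := le_trans (by positivity) hg1
      rw [abs_of_nonneg (by positivity)]
      calc f x * g x ≤ (M * h x) * (N * h x) := by nlinarith
        _ = M*N * h x ^2 := by ring
    have iHF : Integrable (fun x => h x * f x) μ := by
      refine dom _ (hhae.mul hfm) M ?_
      filter_upwards [hP] with x ⟨h0, ⟨hf1, hf2⟩, _⟩
      have h1 : 0 ≤ f x := le_trans (by positivity) hf1
      rw [abs_of_nonneg (by positivity)]
      calc h x * f x ≤ h x * (M * h x) := by nlinarith
        _ = M * h x ^2 := by ring
    have iHG : Integrable (fun x => h x * g x) μ := by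
      refine dom _ (hhae.mul hgm) N ?_
      filter_upwards [hP] with x ⟨h0, _, ⟨hg1, hg2⟩⟩
      have h1 : 0 ≤ g x := le_trans (by positivity) hg1
      rw [abs_of_nonneg (by positivity)]
      calc h x * g x ≤ h x * (N * h x) := by nlinarith
        _ = N * h x ^2 := by ring
    -- expansion lemma
    have expand : ∀ p q r : ℝ, ∫ x, (p * h x + q * f x + r * g x)^2 ∂μ =
        p^2*(∫ x, h x ^ 2 ∂μ) + q^2*(∫ x, f x ^ 2 ∂μ) + r^2*(∫ x, g x ^ 2 ∂μ) +
          2*p*q*(∫ x, h x * f x ∂μ) + 2*p*r*(∫ x, h x * g x ∂μ) +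
          2*q*r*(∫ x, f x * g x ∂μ) := by
      intro p q r
      have hfe : ∀ x, (p * h x + q * f x + r * g x)^2 =
          p^2*(h x ^2) + (q^2*(f x ^2) + (r^2*(g x ^2) + ((2*p*q)*(h x * f x) +
            ((2*p*r)*(h x * g x) + (2*q*r)*(f x * g x))))) := fun x => by ring
      rw [show (fun x => (p * h x + q * f x + r * g x)^2) =
          (fun x => p^2*(h x ^2) + (q^2*(f x ^2) + (r^2*(g x ^2) + ((2*p*q)*(h x * f x) +
            ((2*p*r)*(h x * g x) + (2*q*r)*(f x * g x)))))) from funext hfe]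
      have A5 : Integrable (fun x => (2*p*r)*(h x * g x) + (2*q*r)*(f x * g x)) μ :=
        (iHG.const_mul _).add (iFG.const_mul _)
      have A4 : Integrable (fun x => (2*p*q)*(h x * f x) +
          ((2*p*r)*(h x * g x) + (2*q*r)*(f x * g x))) μ := (iHF.const_mul _).add A5
      have A3 : Integrable (fun x => r^2*(g x ^2) + ((2*p*q)*(h x * f x) +
          ((2*p*r)*(h x * g x) + (2*q*r)*(f x * g x)))) μ := (iG2.const_mul _).add A4
      have A2 : Integrable (fun x => q^2*(f x ^2) + (r^2*(g x ^2) + ((2*p*q)*(h x * f x) +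
          ((2*p*r)*(h x * g x) + (2*q*r)*(f x * g x))))) μ := (iF2.const_mul _).add A3
      rw [integral_add (ih2'.const_mul (p^2)) A2,
          integral_add (iF2.const_mul (q^2)) A3,
          integral_add (iG2.const_mul (r^2)) A4,
          integral_add (iHF.const_mul (2*p*q)) A5,
          integral_add (iHG.const_mul (2*p*r)) (iFG.const_mul (2*q*r))]
      simp only [integral_const_mul]
      ring
    have sqnn : ∀ p q r : ℝ,
        0 ≤ p^2*(∫ x, h x ^ 2 ∂μ) + q^2*(∫ x, f x ^ 2 ∂μ) + r^2*(∫ x, g x ^ 2 ∂μ) +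
          2*p*q*(∫ x, h x * f x ∂μ) + 2*p*r*(∫ x, h x * g x ∂μ) +
          2*q*r*(∫ x, f x * g x ∂μ) := by
      intro p q r
      rw [← expand p q r]
      exact integral_nonneg fun x => sq_nonneg _
    have hHFnn : 0 ≤ ∫ x, h x * f x ∂μ := by
      refine integral_nonneg_of_ae ?_
      filter_upwards [hP] with x ⟨h0, ⟨hf1, _⟩, _⟩
      simp only [Pi.zero_apply]
      have : 0 ≤ f x := le_trans (by positivity) hf1
      positivity
    have hHGnn : 0 ≤ ∫ x, h x * g x ∂μ := by
      refine integral_nonneg_of_ae ?_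
      filter_upwards [hP] with x ⟨h0, _, ⟨hg1, _⟩⟩
      simp only [Pi.zero_apply]
      have : 0 ≤ g x := le_trans (by positivity) hg1
      positivity
    -- Cassels-type inequalities
    have casF : (∫ x, f x ^ 2 ∂μ) + m*M*(∫ x, h x ^ 2 ∂μ) ≤ (M+m)*(∫ x, h x * f x ∂μ) := by
      have key : 0 ≤ ∫ x, ((M+m)*(h x * f x) - f x ^2 - m*M*(h x ^2)) ∂μ := by
        refine integral_nonneg_of_ae ?_
        filter_upwards [hP] with x ⟨h0, ⟨hf1, hf2⟩, _⟩
        simp only [Pi.zero_apply]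
        nlinarith [mul_nonneg (sub_nonneg.2 hf2) (sub_nonneg.2 hf1)]
      have B1 : Integrable (fun x => (M+m)*(h x * f x) - f x ^2) μ :=
        (iHF.const_mul _).sub iF2
      rw [integral_sub B1 (ih2'.const_mul (m*M)),
          integral_sub (iHF.const_mul (M+m)) iF2,
          integral_const_mul, integral_const_mul] at key
      linarith
    have casG : (∫ x, g x ^ 2 ∂μ) + n*N*(∫ x, h x ^ 2 ∂μ) ≤ (N+n)*(∫ x, h x * g x ∂μ) := by
      have key : 0 ≤ ∫ x, ((N+n)*(h x * g x) - g x ^2 - n*N*(h x ^2)) ∂μ := by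
        refine integral_nonneg_of_ae ?_
        filter_upwards [hP] with x ⟨h0, _, ⟨hg1, hg2⟩⟩
        simp only [Pi.zero_apply]
        nlinarith [mul_nonneg (sub_nonneg.2 hg2) (sub_nonneg.2 hg1)]
      have B1 : Integrable (fun x => (N+n)*(h x * g x) - g x ^2) μ :=
        (iHG.const_mul _).sub iG2
      rw [integral_sub B1 (ih2'.const_mul (n*N)),
          integral_sub (iHG.const_mul (N+n)) iG2,
          integral_const_mul, integral_const_mul] at key
      linarith
    have habs := combine (∫ x, h x ^ 2 ∂μ) (∫ x, f x ^ 2 ∂μ) (∫ x, g x ^ 2 ∂μ)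
      (∫ x, f x * g x ∂μ) (∫ x, h x * f x ∂μ) (∫ x, h x * g x ∂μ) M m N n
      hm hmM hn hnN sqnn hHFnn hHGnn casF casG
    -- convert interval integrals
    have e1 : ∫ x in a..b, h x ^ 2 = ∫ x, h x ^ 2 ∂μ := intervalIntegral.integral_of_le hab.le
    have e2 : ∫ x in a..b, f x * g x = ∫ x, f x * g x ∂μ := intervalIntegral.integral_of_le hab.le
    have e3 : ∫ x in a..b, f x * h x = ∫ x, h x * f x ∂μ := by
      rw [show (fun x => f x * h x) = fun x => h x * f x from funext fun x => mul_comm _ _]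
      exact intervalIntegral.integral_of_le hab.le
    have e4 : ∫ x in a..b, h x * g x = ∫ x, h x * g x ∂μ := intervalIntegral.integral_of_le hab.le
    have e5 : ∫ x in a..b, h x * f x = ∫ x, h x * f x ∂μ := intervalIntegral.integral_of_le hab.le
    rw [e1, e2, e3, e4, e5]
    convert habs using 2 <;> ring
  · -- degenerate case: h^2 not integrable, all integrals vanish
    have key : ∀ (u : ℝ → ℝ), AEStronglyMeasurable u μ → ∀ c : ℝ, 0 < c →
        (∀ᵐ x ∂μ, c * h x ^ 2 ≤ u x) → ¬ IntervalIntegrable u MeasureTheory.volume a b := by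
      intro u hu c hc hb hint
      apply ih2
      rw [intervalIntegrable_iff_integrableOn_Ioc_of_le hab.le] at hint ⊢
      refine (hint.const_mul (1/c)).mono' hh2m ?_
      filter_upwards [hb] with x hx
      rw [Real.norm_eq_abs, abs_of_nonneg (sq_nonneg _)]
      rw [div_mul_eq_mul_div, le_div_iff₀ hc]
      linarith
    have nFG : ¬ IntervalIntegrable (fun x => f x * g x) MeasureTheory.volume a b := by
      refine key _ (hfm.mul hgm) (m*n) (by positivity) ?_
      filter_upwards [hP] with x ⟨h0, ⟨hf1, _⟩, ⟨hg1, _⟩⟩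
      calc m*n * h x ^2 = (m * h x) * (n * h x) := by ring
        _ ≤ f x * g x := by
            apply mul_le_mul hf1 hg1 (by positivity)
            exact le_trans (by positivity) hf1
    have nFH : ¬ IntervalIntegrable (fun x => f x * h x) MeasureTheory.volume a b := by
      refine key _ (hfm.mul hhae) m hm ?_
      filter_upwards [hP] with x ⟨h0, ⟨hf1, _⟩, _⟩
      calc m * h x ^2 = (m * h x) * h x := by ring
        _ ≤ f x * h x := mul_le_mul_of_nonneg_right hf1 h0
    have nHF : ¬ IntervalIntegrable (fun x => h x * f x) MeasureTheory.volume a b := by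
      refine key _ (hhae.mul hfm) m hm ?_
      filter_upwards [hP] with x ⟨h0, ⟨hf1, _⟩, _⟩
      calc m * h x ^2 = h x * (m * h x) := by ring
        _ ≤ h x * f x := mul_le_mul_of_nonneg_left hf1 h0
    have nHG : ¬ IntervalIntegrable (fun x => h x * g x) MeasureTheory.volume a b := by
      refine key _ (hhae.mul hgm) n hn ?_
      filter_upwards [hP] with x ⟨h0, _, ⟨hg1, _⟩⟩
      calc n * h x ^2 = h x * (n * h x) := by ring
        _ ≤ h x * g x := mul_le_mul_of_nonneg_left hg1 h0
    rw [intervalIntegral.integral_undef ih2, intervalIntegral.integral_undef nFG,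
        intervalIntegral.integral_undef nFH, intervalIntegral.integral_undef nHF,
        intervalIntegral.integral_undef nHG]
    simp
end

section
/- Let f : [a,b] → ℝ be differentiable with f(x) > 0 on [a,b] and f' integrable. If the functions f and 1/f are both f'-monotone in the same direction (i.e., (f'(x)f(t) − f'(t)f(x))·(f'(x)/f(t) − f'(t)/f(x)) ≥ 0 for all x,t ∈ [a,b]), then (b − a)·∫_a^b (f'(x))² dx ≥ ((f(b)² − f(a)²)/2)·(ln f(b) − ln f(a)); equivalently, ∫_a^b (f'(x))² dx ≥ (A(f(a),f(b))/L(f(a),f(b)))·(f(b) − f(a)), where A is the arithmetic mean and L the logarithmic mean. -/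
open Set Filter MeasureTheory intervalIntegral Topology


lemma darboux_aux {a b : ℝ} {f : ℝ → ℝ}
    (hf : ∀ x ∈ Set.Icc a b, DifferentiableAt ℝ f x)
    {u v : ℝ} (hu : u ∈ Set.Icc a b) (hv : v ∈ Set.Icc a b)
    {y : ℝ} (h1 : deriv f u ≤ y) (h2 : y ≤ deriv f v) :
    ∃ z ∈ Set.uIcc u v, deriv f z = y := by
  have hsub : Set.uIcc u v ⊆ Set.Icc a b := Set.ordConnected_Icc.uIcc_subset hu hv
  have hoc : (Set.uIcc u v).OrdConnected := Set.ordConnected_uIcc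
  have himg := hoc.image_deriv (fun x hx => hf x (hsub hx))
  have hyim : y ∈ deriv f '' Set.uIcc u v := by
    have := himg.out (Set.mem_image_of_mem _ (Set.left_mem_uIcc : u ∈ Set.uIcc u v))
      (Set.mem_image_of_mem _ (Set.right_mem_uIcc : v ∈ Set.uIcc u v))
    exact this ⟨h1, h2⟩
  obtain ⟨z, hz, hz'⟩ := hyim
  exact ⟨z, hz, hz'⟩

lemma endgame_aux {a b : ℝ} {f : ℝ → ℝ} {c : ℝ}
    (hf : ∀ x ∈ Set.Icc a b, DifferentiableAt ℝ f x)
    (levelc : ∀ y : ℝ, 0 < y → y ≤ 1 → ∀ z ∈ Set.Icc a b, deriv f z = y → f z = c)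
    {q r : ℝ} (hq : q ∈ Set.Icc a b) (hr : r ∈ Set.Icc a b) (hqr : q < r)
    (hq1 : deriv f q = 1) (hr1 : deriv f r = 1) (hqc : f q = c) (hrc : f r = c) :
    False := by
  have darb : ∀ {u v : ℝ}, u ∈ Set.Icc a b → v ∈ Set.Icc a b →
      ∀ {y : ℝ}, deriv f u ≤ y → y ≤ deriv f v → ∃ z ∈ Set.uIcc u v, deriv f z = y :=
    fun {u v} hu hv {y} h1 h2 => darboux_aux hf hu hv h1 h2
  have hsub2 : Set.Icc q r ⊆ Set.Icc a b := Set.Icc_subset_Icc hq.1 hr.2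
  have hcont2 : ContinuousOn f (Set.Icc q r) := fun x hx =>
    ((hf x (hsub2 hx)).continuousAt).continuousWithinAt
  obtain ⟨m, hm, hmax⟩ := isCompact_Icc.exists_isMaxOn (Set.nonempty_Icc.2 hqr.le) hcont2
  -- a point z in (q,r) with f z > c
  have hslopeq : Tendsto (slope f q) (𝓝[≠] q) (𝓝 1) := by
    have := hasDerivAt_iff_tendsto_slope.1 (hf q hq).hasDerivAt
    rwa [hq1] at this
  have h1' : Tendsto (slope f q) (𝓝[>] q) (𝓝 1) :=
    hslopeq.mono_left (nhdsWithin_mono q (fun x hx => ne_of_gt hx))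
  have hev2 : ∀ᶠ z in 𝓝[>] q, 0 < slope f q z := h1'.eventually (eventually_gt_nhds one_pos)
  have hev3 : ∀ᶠ z in 𝓝[>] q, z ∈ Set.Ioo q r :=
    eventually_of_mem (Ioo_mem_nhdsGT_of_mem ⟨le_rfl, hqr⟩) (fun x hx => hx)
  obtain ⟨z, hz1, hz2⟩ := (hev2.and hev3).exists
  have hfz : f q < f z := by
    rw [slope_def_field] at hz1
    have h2 : 0 < z - q := sub_pos.2 hz2.1
    nlinarith [mul_pos hz1 h2, div_mul_cancel₀ (f z - f q) h2.ne']
  have hfm : c < f m := by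
    have := hmax (Set.Ioo_subset_Icc_self hz2)
    calc c = f q := hqc.symm
    _ < f z := hfz
    _ ≤ f m := this
  have hmIoo : m ∈ Set.Ioo q r := by
    refine ⟨lt_of_le_of_ne hm.1 ?_, lt_of_le_of_ne hm.2 ?_⟩
    · intro h; rw [h] at hqc; linarith
    · intro h; rw [h] at hfm; linarith
  have hm0 : deriv f m = 0 :=
    (hmax.isLocalMax (Icc_mem_nhds hmIoo.1 hmIoo.2)).deriv_eq_zero
  -- last c-value point before m
  set S := {x ∈ Set.Icc q m | f x = c} with hS
  have hSne : S.Nonempty := ⟨q, ⟨le_rfl, hm.1⟩, hqc⟩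
  have hSc : IsClosed S := by
    have hEq : S = Set.Icc q m ∩ f ⁻¹' {c} := by
      ext x; simp [hS, Set.mem_sep_iff, Set.mem_inter_iff, and_comm]
    rw [hEq]
    exact ContinuousOn.preimage_isClosed_of_isClosed
      (hcont2.mono (Set.Icc_subset_Icc_right hm.2)) isClosed_Icc isClosed_singleton
  have hSbdd : BddAbove S := ⟨m, fun x hx => hx.1.2⟩
  set α := sSup S with hα
  have hαS : α ∈ S := hSc.csSup_mem hSne hSbdd
  have hαm : α < m := lt_of_le_of_ne hαS.1.2 (by intro h; rw [h] at hαS; linarith [hαS.2])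
  have hgt : ∀ x ∈ Set.Ioc α m, c < f x := by
    intro x hx
    rcases lt_trichotomy (f x) c with h | h | h
    · have hxm : x ≤ m := hx.2
      have hcont3 : ContinuousOn f (Set.Icc x m) :=
        hcont2.mono (Set.Icc_subset_Icc (le_trans hαS.1.1 hx.1.le) hm.2)
      obtain ⟨u, hu, hu'⟩ := intermediate_value_Icc hxm hcont3 ⟨h.le, hfm.le⟩
      have huS : u ∈ S := ⟨⟨le_trans (le_trans hαS.1.1 hx.1.le) hu.1, hu.2⟩, hu'⟩
      have := le_csSup hSbdd huS
      have := hx.1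
      have := hu.1
      linarith
    · have hxS : x ∈ S := ⟨⟨le_trans hαS.1.1 hx.1.le, hx.2⟩, h⟩
      have := le_csSup hSbdd hxS
      linarith [hx.1]
    · exact h
  -- mean value theorem on [α, m]
  have hcont4 : ContinuousOn f (Set.Icc α m) := hcont2.mono (Set.Icc_subset_Icc hαS.1.1 hm.2)
  have hdiff4 : DifferentiableOn ℝ f (Set.Ioo α m) := by
    intro x hx
    exact (hf x (hsub2 ⟨le_trans hαS.1.1 hx.1.le, le_trans hx.2.le hm.2⟩)).differentiableWithinAt
  obtain ⟨ξ, hξ, hξ'⟩ := exists_deriv_eq_slope f hαm hcont4 hdiff4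
  have hξpos : 0 < deriv f ξ := by
    rw [hξ']
    apply div_pos
    · have := hgt m ⟨hαm, le_rfl⟩
      rw [hαS.2]
      linarith
    · linarith [hαm]
  have hξIcc : ξ ∈ Set.Icc a b :=
    hsub2 ⟨le_trans hαS.1.1 hξ.1.le, le_trans hξ.2.le hm.2⟩
  set v := min (deriv f ξ) 1 / 2 with hv
  have hmin0 : 0 < min (deriv f ξ) 1 := lt_min hξpos one_pos
  have hv0 : 0 < v := by positivity
  have hv1 : v ≤ 1 := by
    have := min_le_right (deriv f ξ) 1
    rw [hv]; linarith
  have hvξ : v ≤ deriv f ξ := by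
    have := min_le_left (deriv f ξ) 1
    rw [hv]; linarith
  obtain ⟨ζ, hζmem, hζv⟩ := darb (hsub2 hm) hξIcc (by rw [hm0]; exact hv0.le) hvξ
  have hζIoc : ζ ∈ Set.Ioc α m := by
    have h2 : Set.uIcc m ξ = Set.Icc ξ m := by
      rw [Set.uIcc_comm, Set.uIcc_of_le hξ.2.le]
    rw [h2] at hζmem
    exact ⟨lt_of_lt_of_le hξ.1 hζmem.1, hζmem.2⟩
  have hζIcc : ζ ∈ Set.Icc a b :=
    hsub2 ⟨le_trans hαS.1.1 hζIoc.1.le, le_trans hζIoc.2 hm.2⟩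
  have h1 := hgt ζ hζIoc
  have h2 := levelc v hv0 hv1 ζ hζIcc hζv
  linarith

lemma not_unbounded_above {a b : ℝ} (hab : a < b) {f : ℝ → ℝ}
    (hf : ∀ x ∈ Set.Icc a b, DifferentiableAt ℝ f x)
    (hfpos : ∀ x ∈ Set.Icc a b, 0 < f x)
    (hmono : ∀ x ∈ Set.Icc a b, ∀ t ∈ Set.Icc a b,
      0 ≤ (deriv f x * f t - deriv f t * f x) * (deriv f x / f t - deriv f t / f x))
    (hub : ∀ C : ℝ, ∃ x ∈ Set.Icc a b, C < deriv f x) : False := by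
  -- Level-set lemma
  have level : ∀ p ∈ Set.Icc a b, ∀ q ∈ Set.Icc a b, deriv f p = deriv f q →
      deriv f p ≠ 0 → f p = f q := by
    intro p hp q hq heq hne
    have hfp := hfpos p hp
    have hfq := hfpos q hq
    have h := hmono p hp q hq
    rw [← heq] at h
    by_contra hne'
    have e1 : (deriv f p * f q - deriv f p * f p) * (deriv f p / f q - deriv f p / f p)
        * (f p * f q) = -((deriv f p)^2 * (f p - f q)^2) := by
      field_simp
      ring
    have hy2 : 0 < (deriv f p)^2 := by positivity
    have h1 : 0 < (f p - f q)^2 := by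
      have : f p - f q ≠ 0 := sub_ne_zero.2 hne'
      positivity
    nlinarith [mul_nonneg h (mul_pos hfp hfq).le, mul_pos hy2 h1]
  -- a sequence on which deriv f blows up
  have hxe : ∀ n : ℕ, ∃ x ∈ Set.Icc a b, (n : ℝ) < deriv f x := fun n => hub n
  choose xs hxs hgtt using hxe
  obtain ⟨x₀, hx₀, φ, hφ, hlim⟩ := isCompact_Icc.tendsto_subseq hxs
  set L := deriv f x₀ with hL
  set Y := max L 0 + 1 with hY
  have hYL : L < Y := lt_of_le_of_lt (le_max_left _ _) (lt_add_one _)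
  have hY0 : 0 < Y := lt_of_le_of_lt (le_max_right _ _) (lt_add_one _)
  set K := ⌈Y⌉₊ with hK
  set w : ℕ → ℝ := fun n => xs (φ (n + K)) with hw
  have hwmem : ∀ n, w n ∈ Set.Icc a b := fun n => hxs _
  have hwlim : Tendsto w atTop (𝓝 x₀) := hlim.comp (tendsto_add_atTop_nat K)
  have hbig : ∀ n : ℕ, Y < deriv f (w n) := by
    intro n
    have h1 : Y ≤ (K : ℝ) := Nat.le_ceil Y
    have h2 : (K : ℝ) ≤ ((φ (n + K) : ℕ) : ℝ) := by
      exact_mod_cast le_trans (Nat.le_add_left K n) hφ.le_apply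
    have h3 := hgtt (φ (n + K))
    linarith
  -- points with derivative exactly Y
  have hpe : ∀ n : ℕ, ∃ z ∈ Set.uIcc x₀ (w n), deriv f z = Y :=
    fun n => darboux_aux hf hx₀ (hwmem n) hYL.le (hbig n).le
  choose p hpmem hpY using hpe
  have hpIcc : ∀ n, p n ∈ Set.Icc a b :=
    fun n => Set.ordConnected_Icc.uIcc_subset hx₀ (hwmem n) (hpmem n)
  have tend_of_mem : ∀ (r g : ℕ → ℝ), Tendsto r atTop (𝓝 x₀) →
      (∀ n, g n ∈ Set.uIcc x₀ (r n)) → Tendsto g atTop (𝓝 x₀) := by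
    intro r g hr hg
    rw [tendsto_iff_dist_tendsto_zero]
    refine squeeze_zero (fun n => dist_nonneg) (fun n => ?_)
      (tendsto_iff_dist_tendsto_zero.1 hr)
    have h := Real.dist_left_le_of_mem_uIcc (hg n)
    rw [dist_comm x₀ (g n), dist_comm x₀ (r n)] at h
    exact h
  have hplim : Tendsto p atTop (𝓝 x₀) := tend_of_mem w p hwlim hpmem
  have const_val : ∀ g : ℕ → ℝ, Tendsto g atTop (𝓝 x₀) →
      (∀ n, f (g n) = f (g 0)) → f (g 0) = f x₀ := by
    intro g hg hconst
    have h1 : Tendsto (fun n => f (g n)) atTop (𝓝 (f x₀)) :=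
      (hf x₀ hx₀).continuousAt.tendsto.comp hg
    rw [funext hconst] at h1
    exact tendsto_nhds_unique tendsto_const_nhds h1
  have hpc : ∀ n, f (p n) = f (p 0) := by
    intro n
    exact level _ (hpIcc n) _ (hpIcc 0) (by rw [hpY, hpY]) (by rw [hpY]; exact hY0.ne')
  have hp0c : f (p 0) = f x₀ := const_val p hplim hpc
  have hpc' : ∀ n, f (p n) = f x₀ := fun n => (hpc n).trans hp0c
  -- deriv f x₀ = 0
  have hpne : ∀ n, p n ≠ x₀ := by
    intro n h
    have h2 := hpY n
    rw [h] at h2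
    exact hYL.ne (h2.symm ▸ rfl)
  have hL0 : L = 0 := by
    have hslope : Tendsto (slope f x₀) (𝓝[≠] x₀) (𝓝 L) :=
      hasDerivAt_iff_tendsto_slope.1 (hf x₀ hx₀).hasDerivAt
    have hpt : Tendsto p atTop (𝓝[≠] x₀) :=
      tendsto_nhdsWithin_of_tendsto_nhds_of_eventually_within p hplim
        (Eventually.of_forall hpne)
    have h3 : Tendsto (fun n => slope f x₀ (p n)) atTop (𝓝 L) := hslope.comp hpt
    have h4 : ∀ n : ℕ, slope f x₀ (p n) = 0 := by
      intro n
      rw [slope_def_field, hpc' n, sub_self, zero_div]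
    rw [funext h4] at h3
    exact (tendsto_nhds_unique tendsto_const_nhds h3).symm
  have hY1 : Y = 1 := by rw [hY, hL0]; simp
  have hp1 : ∀ n, deriv f (p n) = 1 := fun n => by rw [hpY n, hY1]
  have hx₀0 : deriv f x₀ = 0 := hL0
  -- all points with derivative in (0,1] have value f x₀
  have levelc : ∀ y : ℝ, 0 < y → y ≤ 1 → ∀ z ∈ Set.Icc a b, deriv f z = y → f z = f x₀ := by
    intro y hy0 hy1 z hz hdz
    rcases eq_or_lt_of_le hy1 with h1 | h1
    · have := level z hz (p 0) (hpIcc 0) (by rw [hdz, hp1, h1]) (by rw [hdz]; exact hy0.ne')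
      rw [this, hp0c]
    · have hqe : ∀ n : ℕ, ∃ u ∈ Set.uIcc x₀ (p n), deriv f u = y := by
        intro n
        refine darboux_aux hf hx₀ (hpIcc n) ?_ ?_
        · rw [hx₀0]; exact hy0.le
        · rw [hp1]; exact h1.le
      choose qs hqmem hqy using hqe
      have hqIcc : ∀ n, qs n ∈ Set.Icc a b :=
        fun n => Set.ordConnected_Icc.uIcc_subset hx₀ (hpIcc n) (hqmem n)
      have hqlim : Tendsto qs atTop (𝓝 x₀) := tend_of_mem p qs hplim hqmem
      have hqc : ∀ n, f (qs n) = f (qs 0) := by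
        intro n
        exact level _ (hqIcc n) _ (hqIcc 0) (by rw [hqy, hqy]) (by rw [hqy]; exact hy0.ne')
      have hq0 : f (qs 0) = f x₀ := const_val qs hqlim hqc
      have := level z hz (qs 0) (hqIcc 0) (by rw [hdz, hqy]) (by rw [hdz]; exact hy0.ne')
      rw [this, hq0]
  -- two distinct points with deriv = 1 and value f x₀
  have hd0 : 0 < dist (p 0) x₀ := dist_pos.2 (hpne 0)
  have hev : ∀ᶠ n in atTop, p n ∈ Metric.ball x₀ (dist (p 0) x₀) :=
    hplim (Metric.ball_mem_nhds x₀ hd0)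
  obtain ⟨n₁, hn₁⟩ := hev.exists
  have hne01 : p n₁ ≠ p 0 := by
    intro h
    rw [Metric.mem_ball, h, dist_comm] at hn₁
    rw [dist_comm] at hn₁
    exact lt_irrefl _ hn₁
  rcases hne01.lt_or_gt with hlt | hlt
  · exact endgame_aux hf levelc (hpIcc n₁) (hpIcc 0) hlt (hp1 n₁) (hp1 0) (hpc' n₁) (hpc' 0)
  · exact endgame_aux hf levelc (hpIcc 0) (hpIcc n₁) hlt (hp1 0) (hp1 n₁) (hpc' 0) (hpc' n₁)

lemma deriv_bounded {a b : ℝ} (hab : a < b) {f : ℝ → ℝ}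
    (hf : ∀ x ∈ Set.Icc a b, DifferentiableAt ℝ f x)
    (hfpos : ∀ x ∈ Set.Icc a b, 0 < f x)
    (hmono : ∀ x ∈ Set.Icc a b, ∀ t ∈ Set.Icc a b,
      0 ≤ (deriv f x * f t - deriv f t * f x) * (deriv f x / f t - deriv f t / f x)) :
    ∃ C : ℝ, ∀ x ∈ Set.Icc a b, |deriv f x| ≤ C := by
  have hup : ∃ C, ∀ x ∈ Set.Icc a b, deriv f x ≤ C := by
    by_contra h
    push_neg at h
    exact not_unbounded_above hab hf hfpos hmono fun C => h C
  -- reflected function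
  set g : ℝ → ℝ := fun x => f (a + b - x) with hg
  have hmem : ∀ x ∈ Set.Icc a b, a + b - x ∈ Set.Icc a b := by
    intro x hx
    exact ⟨by linarith [hx.2], by linarith [hx.1]⟩
  have hgd : ∀ x ∈ Set.Icc a b, HasDerivAt g (-(deriv f (a + b - x))) x := by
    intro x hx
    have h1 : HasDerivAt (fun x : ℝ => a + b - x) (-1) x := by
      simpa using (hasDerivAt_id x).const_sub (a + b)
    have h2 := ((hf _ (hmem x hx)).hasDerivAt).comp x h1
    exact h2.congr_deriv (by ring)
  have hgderiv : ∀ x ∈ Set.Icc a b, deriv g x = -(deriv f (a + b - x)) :=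
    fun x hx => (hgd x hx).deriv
  have hgdiff : ∀ x ∈ Set.Icc a b, DifferentiableAt ℝ g x :=
    fun x hx => (hgd x hx).differentiableAt
  have hgpos : ∀ x ∈ Set.Icc a b, 0 < g x := fun x hx => hfpos _ (hmem x hx)
  have hgmono : ∀ x ∈ Set.Icc a b, ∀ t ∈ Set.Icc a b,
      0 ≤ (deriv g x * g t - deriv g t * g x) * (deriv g x / g t - deriv g t / g x) := by
    intro x hx t ht
    rw [hgderiv x hx, hgderiv t ht]
    have h := hmono _ (hmem x hx) _ (hmem t ht)
    have hgt : g t = f (a + b - t) := rfl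
    have hgx : g x = f (a + b - x) := rfl
    rw [hgt, hgx]
    have heq : (-(deriv f (a + b - x)) * f (a + b - t) - -(deriv f (a + b - t)) * f (a + b - x)) *
        (-(deriv f (a + b - x)) / f (a + b - t) - -(deriv f (a + b - t)) / f (a + b - x))
        = (deriv f (a + b - x) * f (a + b - t) - deriv f (a + b - t) * f (a + b - x)) *
          (deriv f (a + b - x) / f (a + b - t) - deriv f (a + b - t) / f (a + b - x)) := by
      ring
    rw [heq]
    exact h
  have hlow : ∃ C, ∀ x ∈ Set.Icc a b, C ≤ deriv f x := by
    by_contra h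
    push_neg at h
    apply not_unbounded_above hab hgdiff hgpos hgmono
    intro C
    obtain ⟨x, hx, hx'⟩ := h (-C)
    refine ⟨a + b - x, hmem x hx, ?_⟩
    rw [hgderiv _ (hmem x hx)]
    have : a + b - (a + b - x) = x := by ring
    rw [this]
    linarith
  obtain ⟨C₁, hC₁⟩ := hup
  obtain ⟨C₂, hC₂⟩ := hlow
  refine ⟨max C₁ (-C₂), fun x hx => abs_le.2 ⟨?_, ?_⟩⟩
  · have := hC₂ x hx
    have h2 : -C₂ ≤ max C₁ (-C₂) := le_max_right _ _
    linarith
  · exact le_trans (hC₁ x hx) (le_max_left _ _)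

theorem deriv_sq_integral_mean_bound (a b : ℝ) (hab : a < b) (f : ℝ → ℝ)
    (hf : ∀ x ∈ Set.Icc a b, DifferentiableAt ℝ f x)
    (hfpos : ∀ x ∈ Set.Icc a b, 0 < f x)
    (hf' : IntervalIntegrable (deriv f) MeasureTheory.volume a b)
    (hmono : ∀ x ∈ Set.Icc a b, ∀ t ∈ Set.Icc a b,
      0 ≤ (deriv f x * f t - deriv f t * f x) *
        (deriv f x / f t - deriv f t / f x)) :
    (b - a) * (∫ x in a..b, (deriv f x) ^ 2) ≥
      ((f b ^ 2 - f a ^ 2) / 2) * (Real.log (f b) - Real.log (f a)) := by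
  obtain ⟨C, hC⟩ := deriv_bounded hab hf hfpos hmono
  have hmeas : Measurable (deriv f) := measurable_deriv f
  have huIcc : Set.uIcc a b = Set.Icc a b := Set.uIcc_of_le hab.le
  have cont : ContinuousOn f (Set.Icc a b) := fun x hx =>
    (hf x hx).continuousAt.continuousWithinAt
  have contu : ContinuousOn f (Set.uIcc a b) := huIcc ▸ cont
  have hinv : ContinuousOn (fun t => (f t)⁻¹) (Set.uIcc a b) := by
    apply contu.inv₀
    intro t ht
    exact (hfpos t (huIcc ▸ ht)).ne'
  have h1 : IntervalIntegrable (fun t => deriv f t * f t) volume a b :=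
    hf'.mul_continuousOn contu
  have h2 : IntervalIntegrable (fun t => deriv f t / f t) volume a b := by
    simpa [div_eq_mul_inv] using hf'.mul_continuousOn hinv
  have hsq : IntervalIntegrable (fun t => deriv f t ^ 2) volume a b := by
    rw [intervalIntegrable_iff]
    refine MeasureTheory.Integrable.mono' (g := fun _ => C ^ 2)
      (MeasureTheory.integrableOn_const measure_Ioc_lt_top.ne)
      ((hmeas.pow_const 2).aestronglyMeasurable.restrict) ?_
    refine MeasureTheory.ae_restrict_of_forall_mem measurableSet_uIoc ?_
    intro x hx
    have hxIcc : x ∈ Set.Icc a b := by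
      rw [Set.uIoc_of_le hab.le] at hx
      exact Set.Ioc_subset_Icc_self hx
    have := hC x hxIcc
    have habs : ‖deriv f x ^ 2‖ = |deriv f x| ^ 2 := by
      rw [Real.norm_eq_abs, abs_pow]
    rw [habs]
    have h0 : 0 ≤ |deriv f x| := abs_nonneg _
    show |deriv f x| ^ 2 ≤ C ^ 2
    nlinarith
  have hA : ∫ t in a..b, deriv f t * f t = (f b ^ 2 - f a ^ 2) / 2 := by
    have hder : ∀ x ∈ Set.uIcc a b, HasDerivAt (fun y => f y ^ 2 / 2) (deriv f x * f x) x := by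
      intro x hx
      have h := ((hf x (huIcc ▸ hx)).hasDerivAt.pow 2).div_const 2
      refine HasDerivAt.congr_deriv h ?_
      push_cast
      ring
    rw [intervalIntegral.integral_eq_sub_of_hasDerivAt hder h1]
    ring
  have hB : ∫ t in a..b, deriv f t / f t = Real.log (f b) - Real.log (f a) := by
    have hder : ∀ x ∈ Set.uIcc a b, HasDerivAt (fun y => Real.log (f y)) (deriv f x / f x) x := by
      intro x hx
      exact (hf x (huIcc ▸ hx)).hasDerivAt.log (hfpos x (huIcc ▸ hx)).ne'
    rw [intervalIntegral.integral_eq_sub_of_hasDerivAt hder h2]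
  set I2 := ∫ t in a..b, deriv f t ^ 2 with hI2
  set A := ∫ t in a..b, deriv f t * f t with hAdef
  set B := ∫ t in a..b, deriv f t / f t with hBdef
  have key : ∀ x ∈ Set.Icc a b,
      0 ≤ (b - a) * deriv f x ^ 2 + I2 - deriv f x / f x * A - deriv f x * f x * B := by
    intro x hx
    have hgint : ∫ t in a..b, (deriv f x ^ 2 + deriv f t ^ 2
        - deriv f x / f x * (deriv f t * f t) - deriv f x * f x * (deriv f t / f t))
        = (b - a) * deriv f x ^ 2 + I2 - deriv f x / f x * A - deriv f x * f x * B := by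
      have e1 : IntervalIntegrable (fun t => deriv f x ^ 2 + deriv f t ^ 2) volume a b :=
        intervalIntegrable_const.add hsq
      have e2 : IntervalIntegrable (fun t => deriv f x / f x * (deriv f t * f t)) volume a b :=
        h1.const_mul _
      have e3 : IntervalIntegrable (fun t => deriv f x * f x * (deriv f t / f t)) volume a b :=
        h2.const_mul _
      rw [intervalIntegral.integral_sub (e1.sub e2) e3, intervalIntegral.integral_sub e1 e2,
        intervalIntegral.integral_add intervalIntegrable_const hsq,
        intervalIntegral.integral_const, intervalIntegral.integral_const_mul,
        intervalIntegral.integral_const_mul, smul_eq_mul, ← hI2, ← hAdef, ← hBdef]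
    rw [← hgint]
    apply intervalIntegral.integral_nonneg hab.le
    intro t ht
    have hfx := hfpos x hx
    have hft := hfpos t ht
    have h := hmono x hx t ht
    have heq : (deriv f x * f t - deriv f t * f x) * (deriv f x / f t - deriv f t / f x)
        = deriv f x ^ 2 + deriv f t ^ 2 - deriv f x / f x * (deriv f t * f t)
          - deriv f x * f x * (deriv f t / f t) := by
      field_simp
      ring
    rw [heq] at h
    exact h
  have houter : 0 ≤ ∫ x in a..b, ((b - a) * deriv f x ^ 2 + I2 - deriv f x / f x * A
      - deriv f x * f x * B) := intervalIntegral.integral_nonneg hab.le key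
  have hcalc : ∫ x in a..b, ((b - a) * deriv f x ^ 2 + I2 - deriv f x / f x * A
      - deriv f x * f x * B) = 2 * ((b - a) * I2 - A * B) := by
    have e1 : IntervalIntegrable (fun x => (b - a) * deriv f x ^ 2 + I2) volume a b :=
      (hsq.const_mul _).add intervalIntegrable_const
    have e2 : IntervalIntegrable (fun x => deriv f x / f x * A) volume a b := h2.mul_const _
    have e3 : IntervalIntegrable (fun x => deriv f x * f x * B) volume a b := h1.mul_const _
    rw [intervalIntegral.integral_sub (e1.sub e2) e3, intervalIntegral.integral_sub e1 e2,
      intervalIntegral.integral_add (hsq.const_mul _) intervalIntegrable_const,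
      intervalIntegral.integral_const, intervalIntegral.integral_const_mul,
      intervalIntegral.integral_mul_const, intervalIntegral.integral_mul_const, smul_eq_mul,
      ← hI2, ← hAdef, ← hBdef]
    ring
  rw [hcalc] at houter
  rw [← hA, ← hB]
  linarith
end
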